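/- arXiv:1806.11028 — 4 statements merged into one kernel-verified Lean document; each statement's English description precedes it below -/
import Mathlib

section
/- Let A ∈ Mat_n(𝕋) and n̄ = lcm(1,2,…,n). If rk_tr(A^n̄) = n, then per(A^n̄) = tr(A^n̄). -/
attribute [local instance] Classical.propDecidable

/-- The tropical (max-plus) semiring carrier: `ℝ ∪ {−∞}`. -/
abbrev Trop : Type := WithBot ℝ

/-- Tropical matrix multiplication: `(A ⊙ B)_{i,j} = max_k (A_{i,k} + B_{k,j})`. -/
def tmul {n m p : ℕ} (A : Matrix (Fin n) (Fin m) Trop) (B : Matrix (Fin m) (Fin p) Trop) :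
    Matrix (Fin n) (Fin p) Trop :=
  fun i j => Finset.univ.sup (fun k => A i k + B k j)

/-- The tropical identity matrix. -/
def tId (n : ℕ) : Matrix (Fin n) (Fin n) Trop :=
  fun i j => if i = j then (0 : Trop) else ⊥

/-- Tropical matrix power. -/
def tPow {n : ℕ} (A : Matrix (Fin n) (Fin n) Trop) : ℕ → Matrix (Fin n) (Fin n) Trop
  | 0 => tId n
  | t + 1 => tmul A (tPow A t)

/-- Weight of a permutation: `ω(π) = Σ_i A_{i,π(i)}`. -/
def permWeight {n : ℕ} (A : Matrix (Fin n) (Fin n) Trop) (π : Equiv.Perm (Fin n)) : Trop :=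
  ∑ i, A i (π i)

/-- Tropical permanent: `per(A) = max_π ω(π)`. -/
def tPer {n : ℕ} (A : Matrix (Fin n) (Fin n) Trop) : Trop :=
  Finset.univ.sup (fun π : Equiv.Perm (Fin n) => permWeight A π)

/-- Nonsingular: exactly one permutation attains the permanent. -/
def Nonsingular {n : ℕ} (A : Matrix (Fin n) (Fin n) Trop) : Prop :=
  ∃! π : Equiv.Perm (Fin n), permWeight A π = tPer A

/-- Tropical rank: the largest `k` such that `A` has a nonsingular `k × k` submatrix. -/
noncomputable def tropRank {n : ℕ} (A : Matrix (Fin n) (Fin n) Trop) : ℕ :=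
  sSup {k : ℕ | ∃ (r : Fin k → Fin n) (c : Fin k → Fin n),
    Function.Injective r ∧ Function.Injective c ∧
    Nonsingular (fun i j => A (r i) (c j))}

/-- Factor rank: the smallest `k` such that `A = B ⊙ C` with `B` of size `n × k` and `C` of
size `k × n`. -/
noncomputable def facRank {n : ℕ} (A : Matrix (Fin n) (Fin n) Trop) : ℕ :=
  sInf {k : ℕ | ∃ (B : Matrix (Fin n) (Fin k) Trop) (C : Matrix (Fin k) (Fin n) Trop),
    A = tmul B C}

/-- Trace: `tr(A) = Σ_i A_{i,i}` in `ℝ ∪ {−∞}`. -/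
def tTrace {n : ℕ} (A : Matrix (Fin n) (Fin n) Trop) : Trop := ∑ i, A i i

/-- Evaluation of a word over the alphabet `{a, b}` (with `a = true`, `b = false`) at the
pair of tropical matrices `(A, B)`, i.e. `a ↦ A`, `b ↦ B`.  (On the empty word it returns
the identity matrix; we only use it on nonempty words.) -/
def mEval {n : ℕ} (A B : Matrix (Fin n) (Fin n) Trop) : List Bool → Matrix (Fin n) (Fin n) Trop
  | [] => tId n
  | x :: w => tmul (if x then A else B) (mEval A B w)

/-- `lcm(1, 2, …, n)`. -/
def nbar (n : ℕ) : ℕ := (Finset.Icc 1 n).lcm id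

/-- A walk on the digraph `G(A)`, given by its list of visited nodes: consecutive nodes must
be joined by an arc, i.e. have weight `≠ −∞`. -/
def IsWalk {n : ℕ} (A : Matrix (Fin n) (Fin n) Trop) (p : List (Fin n)) : Prop :=
  p.Chain' (fun i j => A i j ≠ ⊥)

/-- The weight of a walk: sum of the weights of its arcs. -/
def walkWeight {n : ℕ} (A : Matrix (Fin n) (Fin n) Trop) (p : List (Fin n)) : Trop :=
  ((p.zip p.tail).map (fun q => A q.1 q.2)).sum

/-- The set of nodes on the cycle of the permutation `τ` containing `i`. -/
noncomputable def cycFinset {n : ℕ} (τ : Equiv.Perm (Fin n)) (i : Fin n) : Finset (Fin n) :=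
  Finset.univ.filter (fun j => τ.SameCycle i j)

/-- `μ_i`: the average weight of the unique cycle of `τ` containing `i`. -/
noncomputable def mu {n : ℕ} (A : Matrix (Fin n) (Fin n) Trop) (τ : Equiv.Perm (Fin n))
    (i : Fin n) : ℝ :=
  (∑ j ∈ cycFinset τ i, WithBot.unbotD 0 (A j (τ j))) / (cycFinset τ i).card

/-- Upper triangular tropical matrix: all entries below the diagonal are `−∞`. -/
def UpperTri {n : ℕ} (A : Matrix (Fin n) (Fin n) Trop) : Prop :=
  ∀ i j : Fin n, j < i → A i j = ⊥

/-- Word substitution: replace each letter `a` (`= true`) of `w` by `w₁` and each letter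
`b` (`= false`) by `w₂`. -/
def subst (w w₁ w₂ : List Bool) : List Bool :=
  w.flatMap (fun x => if x then w₁ else w₂)

/-- `k`-fold concatenation `w^k` of a word. -/
def wpow (w : List Bool) : ℕ → List Bool
  | 0 => []
  | t + 1 => w ++ wpow w t

/-- Evaluation of a word over an alphabet `α` in a semigroup `S` under the assignment
`f : α → S`; returns `none` on the empty word. -/
def aEval {S : Type*} [Mul S] {α : Type*} (f : α → S) : List α → Option S
  | [] => none
  | x :: w => some (w.foldl (fun acc y => acc * f y) (f x))

section AuxiliaryLemmas

open Finset

lemma nbar_ne_zero (n : ℕ) : nbar n ≠ 0 := by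
  intro h
  rw [nbar, Finset.lcm_eq_zero_iff] at h
  obtain ⟨a, ha, h0⟩ := h
  simp only [id_eq] at h0
  subst h0
  simp [Finset.mem_coe, Finset.mem_Icc] at ha

lemma perm_pow_nbar {n : ℕ} (g : Equiv.Perm (Fin n)) : g ^ (nbar n) = 1 := by
  rw [← orderOf_dvd_iff_pow_eq_one, ← Equiv.Perm.lcm_cycleType]
  apply Multiset.lcm_dvd.mpr
  intro d hd
  have h2 : 2 ≤ d := Equiv.Perm.two_le_of_mem_cycleType hd
  have hle : d ≤ n := by
    have h1 : d ≤ g.cycleType.sum :=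
      Multiset.single_le_sum (fun x _ => Nat.zero_le x) d hd
    rw [Equiv.Perm.sum_cycleType] at h1
    calc d ≤ g.support.card := h1
      _ ≤ (Finset.univ : Finset (Fin n)).card := Finset.card_le_univ _
      _ = n := by simp
  exact Finset.dvd_lcm (Finset.mem_Icc.mpr ⟨by omega, hle⟩)

lemma walk_le {n : ℕ} (A : Matrix (Fin n) (Fin n) Trop) :
    ∀ (t : ℕ) (f : ℕ → Fin n),
      (∑ δ ∈ Finset.range t, A (f δ) (f (δ + 1))) ≤ tPow A t (f 0) (f t) := by
  intro t
  induction t with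
  | zero =>
    intro f
    simp [tPow, tId]
  | succ t ih =>
    intro f
    rw [Finset.sum_range_succ']
    have h1 : (∑ δ ∈ Finset.range t, A (f (δ + 1)) (f (δ + 1 + 1)))
        ≤ tPow A t (f 1) (f (t + 1)) := ih (fun δ => f (δ + 1))
    have h2 : A (f 0) (f 1) + tPow A t (f 1) (f (t + 1)) ≤ tPow A (t + 1) (f 0) (f (t + 1)) :=
      Finset.le_sup (f := fun k => (A (f 0) k + tPow A t k (f (t + 1)) : Trop))
        (Finset.mem_univ (f 1))
    calc (∑ δ ∈ Finset.range t, A (f (δ + 1)) (f (δ + 1 + 1))) + A (f 0) (f 1)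
        ≤ tPow A t (f 1) (f (t + 1)) + A (f 0) (f 1) := add_le_add_left h1 _
      _ = A (f 0) (f 1) + tPow A t (f 1) (f (t + 1)) := add_comm _ _
      _ ≤ _ := h2

lemma exists_walk {n : ℕ} (A : Matrix (Fin n) (Fin n) Trop) :
    ∀ (t : ℕ), t ≠ 0 → ∀ (z y : Fin n), ∃ f : ℕ → Fin n, f 0 = z ∧ f t = y ∧
      tPow A t z y ≤ ∑ δ ∈ Finset.range t, A (f δ) (f (δ + 1)) := by
  intro t
  induction t with
  | zero => intro h; exact absurd rfl h
  | succ t ih =>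
    intro _ z y
    rcases Nat.eq_zero_or_pos t with ht0 | htpos
    · subst ht0
      refine ⟨fun δ => if δ = 0 then z else y, by simp, by simp, ?_⟩
      have hs : (∑ δ ∈ Finset.range 1,
          A ((fun δ => if δ = 0 then z else y) δ) ((fun δ => if δ = 0 then z else y) (δ + 1)))
          = A z y := by simp
      rw [hs]
      show (Finset.univ : Finset (Fin n)).sup (fun k => A z k + tId n k y) ≤ A z y
      apply Finset.sup_le
      intro k _
      by_cases hk : k = y
      · subst hk
        simp [tId]
      · rw [tId]
        simp [hk]
    · obtain ⟨k₀, _, hk₀⟩ := Finset.exists_mem_eq_sup (Finset.univ : Finset (Fin n))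
        ⟨z, Finset.mem_univ z⟩ (fun k => A z k + tPow A t k y)
      obtain ⟨f', hf'0, hf't, hf'w⟩ := ih htpos.ne' k₀ y
      refine ⟨fun δ => Nat.casesOn δ z f', rfl, hf't, ?_⟩
      have hsum : (∑ δ ∈ Finset.range (t + 1),
          A ((fun δ => Nat.casesOn δ z f' : ℕ → Fin n) δ)
            ((fun δ => Nat.casesOn δ z f' : ℕ → Fin n) (δ + 1)))
          = (∑ δ ∈ Finset.range t, A (f' δ) (f' (δ + 1))) + A z (f' 0) := by
        rw [Finset.sum_range_succ']
        rfl
      rw [hsum, hf'0]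
      show (Finset.univ : Finset (Fin n)).sup (fun k => A z k + tPow A t k y)
          ≤ (∑ δ ∈ Finset.range t, A (f' δ) (f' (δ + 1))) + A z k₀
      rw [hk₀]
      calc A z k₀ + tPow A t k₀ y
          ≤ A z k₀ + ∑ δ ∈ Finset.range t, A (f' δ) (f' (δ + 1)) := add_le_add_right hf'w _
        _ = (∑ δ ∈ Finset.range t, A (f' δ) (f' (δ + 1))) + A z k₀ := add_comm _ _

lemma nonsingular_of_tropRank_eq_card {n : ℕ} (M : Matrix (Fin n) (Fin n) Trop)
    (h : tropRank M = n) : Nonsingular M := by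
  classical
  set S : Set ℕ := {k : ℕ | ∃ (r : Fin k → Fin n) (c : Fin k → Fin n),
    Function.Injective r ∧ Function.Injective c ∧
    Nonsingular (fun i j => M (r i) (c j))} with hS
  have h0 : (0 : ℕ) ∈ S := by
    refine ⟨Fin.elim0, Fin.elim0, fun a => a.elim0, fun a => a.elim0, ?_⟩
    refine ⟨1, ?_, fun y _ => Subsingleton.elim y 1⟩
    apply le_antisymm (Finset.le_sup
      (f := fun π : Equiv.Perm (Fin 0) => permWeight (fun i j => M (Fin.elim0 i) (Fin.elim0 j)) π)
      (Finset.mem_univ 1))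
    apply Finset.sup_le
    intro π _
    rw [Subsingleton.elim π 1]
  have hbdd : BddAbove S := by
    refine ⟨n, fun k hk => ?_⟩
    obtain ⟨r, _, hr, _, _⟩ := hk
    simpa using Fintype.card_le_of_injective r hr
  have hmem : n ∈ S := by
    have hx := Nat.sSup_mem ⟨0, h0⟩ hbdd
    have hsup : sSup S = n := h
    rwa [hsup] at hx
  obtain ⟨r, c, hr, hc, hns⟩ := hmem
  obtain ⟨π₀, hπ₀, hu⟩ := hns
  have hrb := Finite.injective_iff_bijective.mp hr
  have hcb := Finite.injective_iff_bijective.mp hc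
  set R : Equiv.Perm (Fin n) := Equiv.ofBijective r hrb with hR
  set C : Equiv.Perm (Fin n) := Equiv.ofBijective c hcb with hC
  set Ψ : Equiv.Perm (Fin n) → Equiv.Perm (Fin n) := fun π => C * π * R⁻¹ with hΨ
  have hΨapp : ∀ (π : Equiv.Perm (Fin n)) (v : Fin n), Ψ π v = c (π (R.symm v)) := by
    intro π v
    show (C * π * R⁻¹) v = _
    rw [Equiv.Perm.mul_apply, Equiv.Perm.mul_apply]
    rfl
  have hΨw : ∀ π, permWeight (fun i j => M (r i) (c j)) π = permWeight M (Ψ π) := by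
    intro π
    show (∑ i, M (r i) (c (π i))) = ∑ v, M v (Ψ π v)
    rw [← Equiv.sum_comp R (fun v => M v (Ψ π v))]
    refine Finset.sum_congr rfl fun i _ => ?_
    rw [hΨapp, Equiv.symm_apply_apply]
    rfl
  have hΨsurj : Function.Surjective Ψ := fun τ => ⟨C⁻¹ * τ * R, by rw [hΨ]; group⟩
  have hper : tPer (fun i j => M (r i) (c j)) = tPer M := by
    apply le_antisymm
    · apply Finset.sup_le
      intro π _
      rw [hΨw π]
      exact Finset.le_sup (f := fun π' : Equiv.Perm (Fin n) => permWeight M π')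
        (Finset.mem_univ (Ψ π))
    · apply Finset.sup_le
      intro τ _
      obtain ⟨π, rfl⟩ := hΨsurj τ
      rw [← hΨw π]
      exact Finset.le_sup
        (f := fun π' : Equiv.Perm (Fin n) => permWeight (fun i j => M (r i) (c j)) π')
        (Finset.mem_univ π)
  refine ⟨Ψ π₀, ?_, ?_⟩
  · show permWeight M (Ψ π₀) = tPer M
    rw [← hΨw, hπ₀, hper]
  · intro τ hτ
    obtain ⟨π, rfl⟩ := hΨsurj τ
    have hππ : permWeight (fun i j => M (r i) (c j)) π = tPer (fun i j => M (r i) (c j)) := by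
      rw [hΨw, hτ, hper]
    rw [hu π hππ]

end AuxiliaryLemmas

/-- Lemma `per(A^n̄) = tr(A^n̄)` when `rk_tr(A^n̄) = n`. -/
theorem per_eq_trace_of_tropRank_eq {n : ℕ} (A : Matrix (Fin n) (Fin n) Trop)
    (h : tropRank (tPow A (nbar n)) = n) :
    tPer (tPow A (nbar n)) = tTrace (tPow A (nbar n)) := by
  classical
  obtain ⟨σ, hσ, huniq⟩ := nonsingular_of_tropRank_eq_card _ h
  set m := nbar n with hm
  have hreal : ∀ z : Fin n, ∃ f : ℕ → Fin n, f 0 = z ∧ f m = σ z ∧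
      tPow A m z (σ z) ≤ ∑ δ ∈ Finset.range m, A (f δ) (f (δ + 1)) :=
    fun z => exists_walk A m (nbar_ne_zero n) z (σ z)
  choose x hx0 hxm hxw using hreal
  have htr : tTrace (tPow A m) = permWeight (tPow A m) 1 := by
    simp [tTrace, permWeight]
  have hple : permWeight (tPow A m) 1 ≤ tPer (tPow A m) :=
    Finset.le_sup (f := fun π : Equiv.Perm (Fin n) => permWeight (tPow A m) π)
      (Finset.mem_univ 1)
  by_cases hcol : ∃ δ, δ ≤ m ∧ ∃ i j : Fin n, i ≠ j ∧ x i δ = x j δ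
  · -- Case I: two optimal walks collide at the same time; swap their tails, contradicting
    -- the uniqueness of the maximizing permutation.
    exfalso
    obtain ⟨δ₀, hδ₀m, i, j, hij, hxij⟩ := hcol
    have hδ₀lt : δ₀ < m := by
      rcases lt_or_eq_of_le hδ₀m with h' | h'
      · exact h'
      · exact absurd (σ.injective (by rw [← hxm i, ← hxm j, ← h']; exact hxij)) hij
    set τ : Equiv.Perm (Fin n) := σ * Equiv.swap i j with hτ
    have hτi : τ i = σ j := by
      rw [hτ, Equiv.Perm.mul_apply, Equiv.swap_apply_left]
    have hτj : τ j = σ i := by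
      rw [hτ, Equiv.Perm.mul_apply, Equiv.swap_apply_right]
    have hτo : ∀ z, z ≠ i → z ≠ j → τ z = σ z := by
      intro z hzi hzj
      rw [hτ, Equiv.Perm.mul_apply, Equiv.swap_apply_of_ne_of_ne hzi hzj]
    have hne : τ ≠ σ := by
      intro hEq
      have h1 : σ i = σ j := by rw [← hτi, hEq]
      exact hij (σ.injective h1)
    set h1 : ℕ → Fin n := fun t => if t ≤ δ₀ then x i t else x j t with hh1
    set h2 : ℕ → Fin n := fun t => if t ≤ δ₀ then x j t else x i t with hh2
    have key : tPow A m i (σ i) + tPow A m j (σ j)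
        ≤ tPow A m i (σ j) + tPow A m j (σ i) := by
      have u1 : (∑ δ ∈ Finset.range m, A (h1 δ) (h1 (δ + 1))) ≤ tPow A m i (σ j) := by
        have hw := walk_le A m h1
        have e0 : h1 0 = i := by
          simp only [hh1]
          rw [if_pos (Nat.zero_le δ₀), hx0]
        have em : h1 m = σ j := by
          simp only [hh1]
          rw [if_neg (show ¬ m ≤ δ₀ by omega), hxm]
        rwa [e0, em] at hw
      have u2 : (∑ δ ∈ Finset.range m, A (h2 δ) (h2 (δ + 1))) ≤ tPow A m j (σ i) := by
        have hw := walk_le A m h2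
        have e0 : h2 0 = j := by
          simp only [hh2]
          rw [if_pos (Nat.zero_le δ₀), hx0]
        have em : h2 m = σ i := by
          simp only [hh2]
          rw [if_neg (show ¬ m ≤ δ₀ by omega), hxm]
        rwa [e0, em] at hw
      have s1 : (∑ δ ∈ Finset.range m, A (h1 δ) (h1 (δ + 1)))
          = (∑ δ ∈ Finset.Ico 0 δ₀, A (x i δ) (x i (δ + 1)))
            + ∑ δ ∈ Finset.Ico δ₀ m, A (x j δ) (x j (δ + 1)) := by
        rw [Finset.range_eq_Ico,
          ← Finset.sum_Ico_consecutive _ (Nat.zero_le δ₀) hδ₀lt.le]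
        congr 1
        · refine Finset.sum_congr rfl fun δ hδ => ?_
          rw [Finset.mem_Ico] at hδ
          simp only [hh1]
          rw [if_pos (show δ ≤ δ₀ from hδ.2.le), if_pos (show δ + 1 ≤ δ₀ from hδ.2)]
        · refine Finset.sum_congr rfl fun δ hδ => ?_
          rw [Finset.mem_Ico] at hδ
          have hB : (if δ + 1 ≤ δ₀ then x i (δ + 1) else x j (δ + 1)) = x j (δ + 1) := by
            rw [if_neg (show ¬ δ + 1 ≤ δ₀ by omega)]
          have hA : (if δ ≤ δ₀ then x i δ else x j δ) = x j δ := by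
            by_cases hδδ : δ ≤ δ₀
            · have he : δ = δ₀ := le_antisymm hδδ hδ.1
              subst he
              rw [if_pos le_rfl, hxij]
            · rw [if_neg hδδ]
          simp only [hh1]
          rw [hB, hA]
      have s2 : (∑ δ ∈ Finset.range m, A (h2 δ) (h2 (δ + 1)))
          = (∑ δ ∈ Finset.Ico 0 δ₀, A (x j δ) (x j (δ + 1)))
            + ∑ δ ∈ Finset.Ico δ₀ m, A (x i δ) (x i (δ + 1)) := by
        rw [Finset.range_eq_Ico,
          ← Finset.sum_Ico_consecutive _ (Nat.zero_le δ₀) hδ₀lt.le]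
        congr 1
        · refine Finset.sum_congr rfl fun δ hδ => ?_
          rw [Finset.mem_Ico] at hδ
          simp only [hh2]
          rw [if_pos (show δ ≤ δ₀ from hδ.2.le), if_pos (show δ + 1 ≤ δ₀ from hδ.2)]
        · refine Finset.sum_congr rfl fun δ hδ => ?_
          rw [Finset.mem_Ico] at hδ
          have hB : (if δ + 1 ≤ δ₀ then x j (δ + 1) else x i (δ + 1)) = x i (δ + 1) := by
            rw [if_neg (show ¬ δ + 1 ≤ δ₀ by omega)]
          have hA : (if δ ≤ δ₀ then x j δ else x i δ) = x i δ := by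
            by_cases hδδ : δ ≤ δ₀
            · have he : δ = δ₀ := le_antisymm hδδ hδ.1
              subst he
              rw [if_pos le_rfl, hxij]
            · rw [if_neg hδδ]
          simp only [hh2]
          rw [hB, hA]
      have wi : tPow A m i (σ i)
          ≤ (∑ δ ∈ Finset.Ico 0 δ₀, A (x i δ) (x i (δ + 1)))
            + ∑ δ ∈ Finset.Ico δ₀ m, A (x i δ) (x i (δ + 1)) := by
        rw [Finset.sum_Ico_consecutive _ (Nat.zero_le δ₀) hδ₀lt.le, ← Finset.range_eq_Ico]
        exact hxw i
      have wj : tPow A m j (σ j)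
          ≤ (∑ δ ∈ Finset.Ico 0 δ₀, A (x j δ) (x j (δ + 1)))
            + ∑ δ ∈ Finset.Ico δ₀ m, A (x j δ) (x j (δ + 1)) := by
        rw [Finset.sum_Ico_consecutive _ (Nat.zero_le δ₀) hδ₀lt.le, ← Finset.range_eq_Ico]
        exact hxw j
      calc tPow A m i (σ i) + tPow A m j (σ j)
          ≤ ((∑ δ ∈ Finset.Ico 0 δ₀, A (x i δ) (x i (δ + 1)))
              + ∑ δ ∈ Finset.Ico δ₀ m, A (x i δ) (x i (δ + 1)))
            + ((∑ δ ∈ Finset.Ico 0 δ₀, A (x j δ) (x j (δ + 1)))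
              + ∑ δ ∈ Finset.Ico δ₀ m, A (x j δ) (x j (δ + 1))) := add_le_add wi wj
        _ = ((∑ δ ∈ Finset.Ico 0 δ₀, A (x i δ) (x i (δ + 1)))
              + ∑ δ ∈ Finset.Ico δ₀ m, A (x j δ) (x j (δ + 1)))
            + ((∑ δ ∈ Finset.Ico 0 δ₀, A (x j δ) (x j (δ + 1)))
              + ∑ δ ∈ Finset.Ico δ₀ m, A (x i δ) (x i (δ + 1))) := by abel
        _ ≤ tPow A m i (σ j) + tPow A m j (σ i) := by
            rw [← s1, ← s2]
            exact add_le_add u1 u2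
    have hjmem : j ∈ (Finset.univ : Finset (Fin n)).erase i :=
      Finset.mem_erase.mpr ⟨Ne.symm hij, Finset.mem_univ j⟩
    have split : ∀ g : Equiv.Perm (Fin n),
        permWeight (tPow A m) g
          = tPow A m i (g i) + (tPow A m j (g j)
            + ∑ z ∈ ((Finset.univ.erase i).erase j), tPow A m z (g z)) := by
      intro g
      show (∑ z, tPow A m z (g z)) = _
      rw [← Finset.add_sum_erase _ _ (Finset.mem_univ i)]
      congr 1
      rw [← Finset.add_sum_erase _ _ hjmem]
    have hw : permWeight (tPow A m) σ ≤ permWeight (tPow A m) τ := by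
      rw [split σ, split τ, hτi, hτj]
      have hrest : (∑ z ∈ ((Finset.univ.erase i).erase j), tPow A m z (τ z))
          = ∑ z ∈ ((Finset.univ.erase i).erase j), tPow A m z (σ z) := by
        refine Finset.sum_congr rfl fun z hz => ?_
        rw [Finset.mem_erase] at hz
        obtain ⟨hzj, hz'⟩ := hz
        rw [Finset.mem_erase] at hz'
        rw [hτo z hz'.1 hzj]
      rw [hrest, ← add_assoc, ← add_assoc]
      exact add_le_add_left key _
    have hτper : permWeight (tPow A m) τ = tPer (tPow A m) := by
      apply le_antisymm (Finset.le_sup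
        (f := fun π : Equiv.Perm (Fin n) => permWeight (tPow A m) π) (Finset.mem_univ τ))
      calc tPer (tPow A m) = permWeight (tPow A m) σ := hσ.symm
        _ ≤ _ := hw
    exact hne (huniq τ hτper)
  · -- Case II: the optimal walks never collide, so each elementary step is a permutation
    -- of the vertex set; repeating the best step `m` times (its order divides `m = n̄`)
    -- shows the identity permutation is optimal.
    push_neg at hcol
    have hinj : ∀ δ, δ ≤ m → Function.Injective (fun z => x z δ) := by
      intro δ hδ a b hab
      by_contra hne
      exact hcol δ hδ a b hne hab
    set E : ℕ → (Fin n ≃ Fin n) := fun δ =>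
      if hδ : δ ≤ m then Equiv.ofBijective _ (Finite.injective_iff_bijective.mp (hinj δ hδ))
      else Equiv.refl _ with hEdef
    have hE : ∀ δ (hδ : δ ≤ m) (z : Fin n), E δ z = x z δ := by
      intro δ hδ z
      rw [hEdef]
      simp only [dif_pos hδ]
      rfl
    set G : ℕ → Equiv.Perm (Fin n) := fun δ => (E δ).symm.trans (E (δ + 1)) with hGdef
    have hG : ∀ δ, δ < m → ∀ z : Fin n, G δ (x z δ) = x z (δ + 1) := by
      intro δ hδ z
      show (E (δ + 1)) ((E δ).symm (x z δ)) = _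
      rw [← hE δ hδ.le z, Equiv.symm_apply_apply, hE (δ + 1) hδ z]
    have key1 : ∀ δ ∈ Finset.range m,
        (∑ z, A (x z δ) (x z (δ + 1))) = permWeight A (G δ) := by
      intro δ hδ
      rw [Finset.mem_range] at hδ
      calc (∑ z, A (x z δ) (x z (δ + 1)))
          = ∑ z, A (E δ z) (G δ (E δ z)) := by
            refine Finset.sum_congr rfl fun z _ => ?_
            rw [hE δ hδ.le z, hG δ hδ z]
        _ = ∑ v, A v (G δ v) := Equiv.sum_comp (E δ) (fun v => A v (G δ v))
        _ = permWeight A (G δ) := rfl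
    have hmne : (Finset.range m).Nonempty :=
      ⟨0, Finset.mem_range.mpr (Nat.pos_of_ne_zero (nbar_ne_zero n))⟩
    obtain ⟨δs, hδs, hmax⟩ :=
      Finset.exists_max_image (Finset.range m) (fun δ => permWeight A (G δ)) hmne
    set g : Equiv.Perm (Fin n) := G δs with hgdef
    have hord : g ^ m = 1 := perm_pow_nbar g
    have key2 : ∀ δ : ℕ,
        permWeight A g = ∑ v, A ((g ^ δ) v) ((g ^ (δ + 1)) v) := by
      intro δ
      calc permWeight A g = ∑ v, A v (g v) := rfl
        _ = ∑ v, A ((g ^ δ) v) (g ((g ^ δ) v)) :=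
            (Equiv.sum_comp (g ^ δ) (fun v => A v (g v))).symm
        _ = ∑ v, A ((g ^ δ) v) ((g ^ (δ + 1)) v) := by
            refine Finset.sum_congr rfl fun v _ => ?_
            rw [pow_succ']
            rfl
    have keyU : ∀ v : Fin n,
        (∑ δ ∈ Finset.range m, A ((g ^ δ) v) ((g ^ (δ + 1)) v)) ≤ tPow A m v v := by
      intro v
      have h00 : ((g : Equiv.Perm (Fin n)) ^ 0) v = v := by simp
      have hmm : (g ^ m) v = v := by rw [hord]; simp
      calc (∑ δ ∈ Finset.range m, A ((g ^ δ) v) ((g ^ (δ + 1)) v))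
          ≤ tPow A m ((g ^ 0) v) ((g ^ m) v) := walk_le A m (fun δ => (g ^ δ) v)
        _ = tPow A m v v := by rw [h00, hmm]
    have main : tPer (tPow A m) ≤ tTrace (tPow A m) := by
      calc tPer (tPow A m) = permWeight (tPow A m) σ := hσ.symm
        _ ≤ ∑ z, ∑ δ ∈ Finset.range m, A (x z δ) (x z (δ + 1)) :=
            Finset.sum_le_sum fun z _ => hxw z
        _ = ∑ δ ∈ Finset.range m, ∑ z, A (x z δ) (x z (δ + 1)) := Finset.sum_comm
        _ = ∑ δ ∈ Finset.range m, permWeight A (G δ) := Finset.sum_congr rfl key1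
        _ ≤ ∑ δ ∈ Finset.range m, permWeight A g :=
            Finset.sum_le_sum fun δ hδ => hmax δ hδ
        _ = ∑ δ ∈ Finset.range m, ∑ v, A ((g ^ δ) v) ((g ^ (δ + 1)) v) :=
            Finset.sum_congr rfl fun δ _ => key2 δ
        _ = ∑ v, ∑ δ ∈ Finset.range m, A ((g ^ δ) v) ((g ^ (δ + 1)) v) := Finset.sum_comm
        _ ≤ ∑ v, tPow A m v v := Finset.sum_le_sum fun v _ => keyU v
        _ = tTrace (tPow A m) := rfl
    exact le_antisymm main (htr ▸ hple)
end

section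
/- For all A, B ∈ Mat_n(𝕋), per(AB) ≥ per(A) + per(B) (in ℝ ∪ {−∞}). Moreover, if AB is nonsingular, then A and B are nonsingular, per(AB) = per(A) + per(B), and the unique optimal permutations satisfy τ_{AB} = τ_B ∘ τ_A. -/
attribute [local instance] Classical.propDecidable

lemma le_tPer' {n : ℕ} (A : Matrix (Fin n) (Fin n) Trop) (π : Equiv.Perm (Fin n)) :
    permWeight A π ≤ tPer A :=
  Finset.le_sup (Finset.mem_univ π)

lemma exists_max' {n : ℕ} (A : Matrix (Fin n) (Fin n) Trop) :
    ∃ π : Equiv.Perm (Fin n), permWeight A π = tPer A := by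
  obtain ⟨π, -, h⟩ := Finset.exists_mem_eq_sup Finset.univ Finset.univ_nonempty
    (fun π : Equiv.Perm (Fin n) => permWeight A π)
  exact ⟨π, h.symm⟩

lemma key_lb {n : ℕ} (A B : Matrix (Fin n) (Fin n) Trop) (σ π' : Equiv.Perm (Fin n)) :
    permWeight A σ + permWeight B π' ≤ permWeight (tmul A B) (π' * σ) := by
  unfold permWeight
  rw [← Equiv.sum_comp σ (fun i => B i (π' i)), ← Finset.sum_add_distrib]
  exact Finset.sum_le_sum fun i _ =>
    Finset.le_sup (f := fun k => A i k + B k ((π' * σ) i)) (Finset.mem_univ (σ i))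

lemma trop_split {a b c d : Trop} (h1 : a ≤ c) (h2 : b ≤ d) (h3 : a + b = c + d)
    (h4 : c + d ≠ ⊥) : a = c ∧ b = d := by
  rw [Ne, WithBot.add_eq_bot, not_or] at h4
  obtain ⟨hc, hd⟩ := h4
  have h5 : ¬(a = ⊥ ∨ b = ⊥) := by
    rw [← WithBot.add_eq_bot, h3, WithBot.add_eq_bot]; exact not_or.mpr ⟨hc, hd⟩
  obtain ⟨ha, hb⟩ := not_or.mp h5
  lift a to ℝ using ha
  lift b to ℝ using hb
  lift c to ℝ using hc
  lift d to ℝ using hd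
  rw [WithBot.coe_le_coe] at h1 h2
  rw [← WithBot.coe_add, ← WithBot.coe_add, WithBot.coe_inj] at h3
  constructor <;> · rw [WithBot.coe_inj]; linarith

/-- permanents of products.  `per(AB) ≥ per(A) + per(B)`, and if `AB` is
nonsingular, then so are `A` and `B`, with `per(AB) = per(A) + per(B)` and
`τ_{AB} = τ_B ∘ τ_A`. -/
theorem per_tmul {n : ℕ} (A B : Matrix (Fin n) (Fin n) Trop) :
    tPer A + tPer B ≤ tPer (tmul A B) ∧
    (Nonsingular (tmul A B) →
      Nonsingular A ∧ Nonsingular B ∧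
      tPer (tmul A B) = tPer A + tPer B ∧
      ∀ πA πB π : Equiv.Perm (Fin n),
        permWeight A πA = tPer A →
        permWeight B πB = tPer B →
        permWeight (tmul A B) π = tPer (tmul A B) →
        π = πB * πA) := by
  have part1 : tPer A + tPer B ≤ tPer (tmul A B) := by
    obtain ⟨πA, hA⟩ := exists_max' A
    obtain ⟨πB, hB⟩ := exists_max' B
    calc tPer A + tPer B = permWeight A πA + permWeight B πB := by rw [hA, hB]
      _ ≤ permWeight (tmul A B) (πB * πA) := key_lb A B πA πB
      _ ≤ tPer (tmul A B) := le_tPer' _ _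
  refine ⟨part1, fun hNS => ?_⟩
  obtain ⟨π₀, hπ₀, huniq⟩ := hNS
  -- choose a maximizing index for each row
  have hf : ∀ i : Fin n, ∃ k : Fin n, tmul A B i (π₀ i) = A i k + B k (π₀ i) := by
    intro i
    obtain ⟨k, -, hk⟩ := Finset.exists_mem_eq_sup Finset.univ ⟨i, Finset.mem_univ i⟩
      (fun k => A i k + B k (π₀ i))
    exact ⟨k, hk⟩
  choose f hfk using hf
  -- f is injective by the swap argument
  have hinj : Function.Injective f := by
    intro i₀ j₀ hij
    by_contra hne
    have hfs : ∀ i, f (Equiv.swap i₀ j₀ i) = f i := by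
      intro i
      rcases eq_or_ne i i₀ with rfl | h1
      · rw [Equiv.swap_apply_left]; exact hij.symm
      rcases eq_or_ne i j₀ with rfl | h2
      · rw [Equiv.swap_apply_right]; exact hij
      · rw [Equiv.swap_apply_of_ne_of_ne h1 h2]
    have hswap : permWeight (tmul A B) (π₀ * Equiv.swap i₀ j₀) = tPer (tmul A B) := by
      refine le_antisymm (le_tPer' _ _) ?_
      calc tPer (tmul A B) = permWeight (tmul A B) π₀ := hπ₀.symm
        _ = ∑ i, (A i (f i) + B (f i) (π₀ i)) := Finset.sum_congr rfl fun i _ => hfk i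
        _ = ∑ i, A i (f i) + ∑ i, B (f i) (π₀ i) := Finset.sum_add_distrib
        _ = ∑ i, A i (f i) + ∑ i, B (f i) (π₀ (Equiv.swap i₀ j₀ i)) := by
            congr 1
            rw [← Equiv.sum_comp (Equiv.swap i₀ j₀)
              (fun i => B (f i) (π₀ (Equiv.swap i₀ j₀ i)))]
            refine Finset.sum_congr rfl fun i _ => ?_
            rw [hfs, Equiv.swap_apply_self]
        _ = ∑ i, (A i (f i) + B (f i) (π₀ (Equiv.swap i₀ j₀ i))) := Finset.sum_add_distrib.symm
        _ ≤ permWeight (tmul A B) (π₀ * Equiv.swap i₀ j₀) :=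
            Finset.sum_le_sum fun i _ =>
              Finset.le_sup (f := fun k => A i k + B k ((π₀ * Equiv.swap i₀ j₀) i))
                (Finset.mem_univ (f i))
    have heqp := huniq _ hswap
    have : π₀ (Equiv.swap i₀ j₀ j₀) = π₀ j₀ := by
      conv_rhs => rw [← heqp]
      rfl
    rw [Equiv.swap_apply_right] at this
    exact hne (π₀.injective this)
  -- turn f into a permutation σ
  let σ : Equiv.Perm (Fin n) := Equiv.ofBijective f (Finite.injective_iff_bijective.mp hinj)
  have hσ : ∀ i, σ i = f i := fun i => rfl
  -- decompose the weight of π₀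
  have hsum : tPer (tmul A B) = permWeight A σ + permWeight B (π₀ * σ⁻¹) := by
    calc tPer (tmul A B) = permWeight (tmul A B) π₀ := hπ₀.symm
      _ = ∑ i, (A i (σ i) + B (σ i) (π₀ i)) := Finset.sum_congr rfl fun i _ => by
          rw [hσ]; exact hfk i
      _ = ∑ i, A i (σ i) + ∑ i, B (σ i) (π₀ i) := Finset.sum_add_distrib
      _ = permWeight A σ + permWeight B (π₀ * σ⁻¹) := by
          congr 1
          show _ = ∑ j, B j ((π₀ * σ⁻¹) j)
          rw [← Equiv.sum_comp σ (fun j => B j ((π₀ * σ⁻¹) j))]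
          exact Finset.sum_congr rfl fun i _ => by simp [Equiv.Perm.mul_apply]
  have hA_le : permWeight A σ ≤ tPer A := le_tPer' _ _
  have hB_le : permWeight B (π₀ * σ⁻¹) ≤ tPer B := le_tPer' _ _
  have heq : tPer (tmul A B) = tPer A + tPer B :=
    le_antisymm (hsum ▸ add_le_add hA_le hB_le) part1
  rcases eq_or_ne (tPer (tmul A B)) ⊥ with hbot | hbot
  · -- degenerate case: all permutations attain ⊥, so Perm is a subsingleton
    haveI hss : Subsingleton (Equiv.Perm (Fin n)) := by
      refine ⟨fun a b => ?_⟩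
      have ha : permWeight (tmul A B) a = tPer (tmul A B) := by
        refine le_antisymm (le_tPer' _ _) ?_
        rw [hbot]; exact bot_le
      have hb : permWeight (tmul A B) b = tPer (tmul A B) := by
        refine le_antisymm (le_tPer' _ _) ?_
        rw [hbot]; exact bot_le
      rw [huniq a ha, huniq b hb]
    obtain ⟨πA', hA'⟩ := exists_max' A
    obtain ⟨πB', hB'⟩ := exists_max' B
    exact ⟨⟨πA', hA', fun y _ => Subsingleton.elim y πA'⟩,
      ⟨πB', hB', fun y _ => Subsingleton.elim y πB'⟩, heq,
      fun πA πB π _ _ _ => Subsingleton.elim _ _⟩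
  · have hsplit : permWeight A σ = tPer A ∧ permWeight B (π₀ * σ⁻¹) = tPer B :=
      trop_split hA_le hB_le (hsum.symm.trans heq) (heq ▸ hbot)
    obtain ⟨hwA, hwB⟩ := hsplit
    have uA : ∀ σ' : Equiv.Perm (Fin n), permWeight A σ' = tPer A → σ' = σ := by
      intro σ' h'
      have hmax : permWeight (tmul A B) ((π₀ * σ⁻¹) * σ') = tPer (tmul A B) := by
        refine le_antisymm (le_tPer' _ _) ?_
        calc tPer (tmul A B) = tPer A + tPer B := heq
          _ = permWeight A σ' + permWeight B (π₀ * σ⁻¹) := by rw [h', hwB]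
          _ ≤ permWeight (tmul A B) ((π₀ * σ⁻¹) * σ') := key_lb A B σ' (π₀ * σ⁻¹)
      have h2 : (π₀ * σ⁻¹) * σ' = (π₀ * σ⁻¹) * σ := by
        rw [huniq _ hmax]; group
      exact mul_left_cancel h2
    have uB : ∀ π' : Equiv.Perm (Fin n), permWeight B π' = tPer B → π' = π₀ * σ⁻¹ := by
      intro π' h'
      have hmax : permWeight (tmul A B) (π' * σ) = tPer (tmul A B) := by
        refine le_antisymm (le_tPer' _ _) ?_
        calc tPer (tmul A B) = tPer A + tPer B := heq
          _ = permWeight A σ + permWeight B π' := by rw [h', hwA]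
          _ ≤ permWeight (tmul A B) (π' * σ) := key_lb A B σ π'
      have h2 := huniq _ hmax
      rw [← h2]; group
    refine ⟨⟨σ, hwA, uA⟩, ⟨π₀ * σ⁻¹, hwB, uB⟩, heq, ?_⟩
    intro πA πB π hA hB hπ
    rw [huniq π hπ, uA πA hA, uB πB hB]
    group
end

section
/- Let A, B ∈ Mat_n(𝕋) and w ∈ {a,b}⁺ satisfy per(A) = tr(A), per(B) = tr(B), and rk_tr(w(A,B)) = n. Then tr(w(A,B)) = |w|_a · tr(A) + |w|_b · tr(B), where |w|_a and |w|_b are the numbers of occurrences of the letters a and b in w. -/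
attribute [local instance] Classical.propDecidable

section TraceEvalAux

open Finset

variable {n : ℕ}

private abbrev TMat (n : ℕ) := Matrix (Fin n) (Fin n) Trop

private def tProd {n : ℕ} : List (TMat n) → TMat n
  | [] => tId n
  | M :: L => tmul M (tProd L)

private lemma mEval_eq_tProd (A B : TMat n) (w : List Bool) :
    mEval A B w = tProd (w.map (fun x => if x then A else B)) := by
  induction w with
  | nil => rfl
  | cons x w ih => simp only [mEval, List.map_cons, tProd, ih]

private lemma sup_add_const {α : Type*} (s : Finset α) (f : α → Trop) (c : Trop) :
    s.sup (fun k => f k + c) = s.sup f + c := by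
  rcases s.eq_empty_or_nonempty with h | h
  · simp [h]
  · obtain ⟨k₀, hk₀, hsup⟩ := s.exists_mem_eq_sup h f
    apply le_antisymm
    · exact Finset.sup_le fun k hk => add_le_add_left (Finset.le_sup hk) c
    · rw [hsup]
      exact Finset.le_sup (f := fun k => f k + c) hk₀

private lemma const_add_sup {α : Type*} (s : Finset α) (f : α → Trop) (c : Trop) :
    s.sup (fun k => c + f k) = c + s.sup f := by
  rcases s.eq_empty_or_nonempty with h | h
  · simp [h]
  · obtain ⟨k₀, hk₀, hsup⟩ := s.exists_mem_eq_sup h f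
    apply le_antisymm
    · exact Finset.sup_le fun k hk => add_le_add_right (Finset.le_sup hk) c
    · rw [hsup]
      exact Finset.le_sup (f := fun k => c + f k) hk₀

private lemma tmul_assoc {A : TMat n} {B : TMat n} {C : TMat n} :
    tmul (tmul A B) C = tmul A (tmul B C) := by
  funext i j
  show Finset.univ.sup (fun k => (tmul A B) i k + C k j)
      = Finset.univ.sup (fun l => A i l + (tmul B C) l j)
  calc Finset.univ.sup (fun k => (tmul A B) i k + C k j)
      = Finset.univ.sup (fun k => Finset.univ.sup (fun l => (A i l + B l k) + C k j)) := by
        refine Finset.sup_congr rfl fun k _ => ?_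
        rw [show (tmul A B) i k = Finset.univ.sup (fun l => A i l + B l k) from rfl,
          sup_add_const]
    _ = Finset.univ.sup (fun l => Finset.univ.sup (fun k => (A i l + B l k) + C k j)) :=
        Finset.sup_comm _ _ _
    _ = Finset.univ.sup (fun l => A i l + (tmul B C) l j) := by
        refine Finset.sup_congr rfl fun l _ => ?_
        rw [show (tmul B C) l j = Finset.univ.sup (fun k => B l k + C k j) from rfl,
          ← const_add_sup]
        simp [add_assoc]

private lemma tmul_tId (C : TMat n) : tmul C (tId n) = C := by
  funext i j
  apply le_antisymm
  · refine Finset.sup_le fun k _ => ?_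
    by_cases h : k = j
    · simp [h, tId]
    · simp [tId, h]
  · have := Finset.le_sup (f := fun k => C i k + tId n k j) (Finset.mem_univ j)
    exact le_trans (le_of_eq (by simp [tId])) this

private lemma permWeight_le_tPer (A : TMat n) (π : Equiv.Perm (Fin n)) :
    permWeight A π ≤ tPer A :=
  Finset.le_sup (Finset.mem_univ π)

private lemma tTrace_le_tPer (A : TMat n) : tTrace A ≤ tPer A := by
  have : permWeight A 1 = tTrace A := by simp [permWeight, tTrace]
  rw [← this]; exact permWeight_le_tPer A 1

end TraceEvalAux

section TraceEvalKey
open Finset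
variable {n : ℕ}

private lemma keyB : ∀ (L : List (TMat n)) (C : TMat n),
    Nonsingular (tmul C (tProd L)) →
    ∃ g : Equiv.Perm (Fin n),
      tPer (tmul C (tProd L)) ≤ permWeight C g + (L.map tPer).sum ∧
      ∀ g' : Equiv.Perm (Fin n), permWeight C g ≤ permWeight C g' →
        permWeight C g ≠ ⊥ → g' = g := by
  intro L
  induction L with
  | nil =>
    intro C hC
    rw [tProd, tmul_tId] at hC
    obtain ⟨π₀, hπ₀, huniq⟩ := hC
    refine ⟨π₀, ?_, fun g' hge _ => huniq g' (le_antisymm (permWeight_le_tPer _ _)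
      (hπ₀ ▸ hge))⟩
    rw [tProd, tmul_tId, List.map_nil, List.sum_nil, add_zero, hπ₀]
  | cons M L ih =>
    intro C hQ
    have hassoc : tmul C (tProd (M :: L)) = tmul (tmul C M) (tProd L) := by
      rw [tProd, ← tmul_assoc]
    rw [hassoc] at hQ ⊢
    set C' := tmul C M with hC'
    obtain ⟨g, hg1, hg2⟩ := ih C' hQ
    by_cases hbot : permWeight C' g = ⊥
    · -- degenerate case: the permanent is ⊥ and all permutations coincide
      have hperbot : tPer (tmul C' (tProd L)) = ⊥ := by
        refine le_bot_iff.mp ?_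
        calc tPer (tmul C' (tProd L)) ≤ permWeight C' g + (L.map tPer).sum := hg1
          _ = ⊥ := by rw [hbot]; simp
      obtain ⟨π₀, hπ₀, huniq⟩ := hQ
      have hall : ∀ σ : Equiv.Perm (Fin n), σ = π₀ := fun σ =>
        huniq σ (le_antisymm (permWeight_le_tPer _ _) (by rw [hperbot]; exact bot_le))
      exact ⟨π₀, by rw [hperbot]; exact bot_le, fun g' _ _ => hall g'⟩
    · -- main case
      have hchoice : ∀ i : Fin n, ∃ k : Fin n, C' i (g i) = C i k + M k (g i) := by
        intro i
        obtain ⟨k, _, hk2⟩ := Finset.exists_mem_eq_sup Finset.univ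
          (Finset.univ_nonempty_iff.mpr ⟨i⟩) (fun k => C i k + M k (g i))
        exact ⟨k, hk2⟩
      choose h hh using hchoice
      -- the splitting of permWeight C' g
      have hsplit : permWeight C' g = (∑ i, C i (h i)) + ∑ i, M (h i) (g i) := by
        calc permWeight C' g = ∑ i, C' i (g i) := rfl
          _ = ∑ i, (C i (h i) + M (h i) (g i)) := Finset.sum_congr rfl fun i _ => hh i
          _ = _ := Finset.sum_add_distrib
      have hinj : Function.Injective h := by
        by_contra hni
        obtain ⟨i₁, i₂, hheq, hne⟩ := Function.not_injective_iff.mp hni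
        set τ := Equiv.swap i₁ i₂ with hτ
        have hτh : ∀ i, h (τ i) = h i := by
          intro i
          rcases eq_or_ne i i₁ with rfl | h1
          · rw [hτ, Equiv.swap_apply_left, hheq]
          rcases eq_or_ne i i₂ with rfl | h2
          · rw [hτ, Equiv.swap_apply_right, hheq]
          · rw [hτ, Equiv.swap_apply_of_ne_of_ne h1 h2]
        have key : permWeight C' g ≤ permWeight C' (g * τ) := by
          have hMsum : ∑ i, M (h i) (g (τ i)) = ∑ i, M (h i) (g i) := by
            calc ∑ i, M (h i) (g (τ i)) = ∑ i, M (h (τ i)) (g (τ (τ i))) := by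
                  exact (Equiv.sum_comp τ (fun i => M (h i) (g (τ i)))).symm
              _ = ∑ i, M (h i) (g i) := by
                  refine Finset.sum_congr rfl fun i _ => ?_
                  rw [hτh i, Equiv.swap_apply_self]
          calc permWeight C' g = (∑ i, C i (h i)) + ∑ i, M (h i) (g i) := hsplit
            _ = (∑ i, C i (h i)) + ∑ i, M (h i) (g (τ i)) := by rw [hMsum]
            _ = ∑ i, (C i (h i) + M (h i) (g (τ i))) := Finset.sum_add_distrib.symm
            _ ≤ ∑ i, C' i ((g * τ) i) := by
                refine Finset.sum_le_sum fun i _ => ?_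
                exact Finset.le_sup (f := fun k => C i k + M k (g (τ i)))
                  (Finset.mem_univ (h i))
            _ = permWeight C' (g * τ) := rfl
        have := hg2 (g * τ) key hbot
        have h2 : g (τ i₁) = g i₁ := by
          conv_rhs => rw [← this]
          rfl
        rw [hτ, Equiv.swap_apply_left] at h2
        exact hne (g.injective h2).symm
      -- h as a permutation
      have hbij : Function.Bijective h := (Finite.injective_iff_bijective).mp hinj
      set hp : Equiv.Perm (Fin n) := Equiv.ofBijective h hbij with hhp
      have hpapp : ∀ i, hp i = h i := fun i => rfl
      have hMw : ∑ i, M (h i) (g i) = permWeight M (g * hp⁻¹) := by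
        calc ∑ i, M (h i) (g i) = ∑ i, M (hp i) (g (hp⁻¹ (hp i))) := by
              refine Finset.sum_congr rfl fun i _ => ?_
              rw [show hp⁻¹ (hp i) = i from hp.symm_apply_apply i]
              rfl
            _ = ∑ j, M j (g (hp⁻¹ j)) := Equiv.sum_comp hp (fun j => M j (g (hp⁻¹ j)))
            _ = permWeight M (g * hp⁻¹) := rfl
      have hCw : ∑ i, C i (h i) = permWeight C hp := rfl
      refine ⟨hp, ?_, ?_⟩
      · -- the permanent bound
        calc tPer (tmul C' (tProd L))
            ≤ permWeight C' g + (L.map tPer).sum := hg1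
          _ = (permWeight C hp + permWeight M (g * hp⁻¹)) + (L.map tPer).sum := by
              rw [hsplit, hMw, hCw]
          _ ≤ (permWeight C hp + tPer M) + (L.map tPer).sum := by
              exact add_le_add_left (add_le_add_right (permWeight_le_tPer M _) _) _
          _ = permWeight C hp + ((M :: L).map tPer).sum := by
              rw [List.map_cons, List.sum_cons, add_assoc]
      · -- uniqueness transfer
        intro h' hge hCbot
        have hcomp : permWeight C' g ≤ permWeight C' (g * hp⁻¹ * h') := by
          calc permWeight C' g = permWeight C hp + permWeight M (g * hp⁻¹) := by
                rw [hsplit, hMw, hCw]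
            _ ≤ permWeight C h' + permWeight M (g * hp⁻¹) :=
                add_le_add_left hge _
            _ = (∑ i, C i (h' i)) + ∑ j, M j (g (hp⁻¹ j)) := rfl
            _ = (∑ i, C i (h' i)) + ∑ i, M (h' i) (g (hp⁻¹ (h' i))) := by
                rw [Equiv.sum_comp h' (fun j => M j (g (hp⁻¹ j)))]
            _ = ∑ i, (C i (h' i) + M (h' i) (g (hp⁻¹ (h' i)))) :=
                Finset.sum_add_distrib.symm
            _ ≤ ∑ i, C' i ((g * hp⁻¹ * h') i) := by
                refine Finset.sum_le_sum fun i _ => ?_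
                exact Finset.le_sup (f := fun k => C i k + M k (g (hp⁻¹ (h' i))))
                  (Finset.mem_univ (h' i))
            _ = permWeight C' (g * hp⁻¹ * h') := rfl
        have := hg2 (g * hp⁻¹ * h') hcomp hbot
        have h1 : g * (hp⁻¹ * h') = g * 1 := by rw [mul_one, ← mul_assoc, this]
        have h2 : hp⁻¹ * h' = 1 := mul_left_cancel h1
        exact (inv_mul_eq_one.mp h2).symm

end TraceEvalKey

section TraceEvalRest
open Finset
variable {n : ℕ}

private lemma nonsingular_of_rank (W : TMat n) (h : tropRank W = n) : Nonsingular W := by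
  set S : Set ℕ := {k : ℕ | ∃ (r : Fin k → Fin n) (c : Fin k → Fin n),
    Function.Injective r ∧ Function.Injective c ∧
    Nonsingular (fun i j => W (r i) (c j))} with hS
  have h0 : 0 ∈ S := by
    refine ⟨Fin.elim0, Fin.elim0, fun a => a.elim0, fun a => a.elim0, ?_⟩
    refine ⟨1, ?_, fun π _ => Equiv.ext fun x => x.elim0⟩
    refine le_antisymm (permWeight_le_tPer _ _) (Finset.sup_le fun π _ => ?_)
    rw [show π = 1 from Equiv.ext fun x => x.elim0]
  have hbdd : BddAbove S := by
    refine ⟨n, fun k hk => ?_⟩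
    obtain ⟨r, _, hr, _, _⟩ := hk
    simpa using Fintype.card_le_of_injective r hr
  have hn : n ∈ S := by
    have := Nat.sSup_mem ⟨0, h0⟩ hbdd
    rwa [show sSup S = n from h] at this
  obtain ⟨r, c, hr, hc, hns⟩ := hn
  set R : Equiv.Perm (Fin n) := Equiv.ofBijective r ((Finite.injective_iff_bijective).mp hr)
    with hR
  set Cc : Equiv.Perm (Fin n) := Equiv.ofBijective c ((Finite.injective_iff_bijective).mp hc)
    with hCc
  set Φ : Equiv.Perm (Fin n) → Equiv.Perm (Fin n) :=
    fun π => (R⁻¹ : Equiv.Perm (Fin n)).trans (π.trans Cc) with hΦ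
  have hΦw : ∀ π, permWeight (fun i j => W (r i) (c j)) π = permWeight W (Φ π) := by
    intro π
    show ∑ i, W (r i) (c (π i)) = ∑ j, W j (Cc (π (R⁻¹ j)))
    calc ∑ i, W (r i) (c (π i))
        = ∑ i, W (R i) (Cc (π (R⁻¹ (R i)))) := by
          refine Finset.sum_congr rfl fun i _ => ?_
          rw [show R⁻¹ (R i) = i from R.symm_apply_apply i]
          rfl
      _ = ∑ j, W j (Cc (π (R⁻¹ j))) := Equiv.sum_comp R (fun j => W j (Cc (π (R⁻¹ j))))
  have hΦsurj : Function.Surjective Φ := by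
    intro σ
    refine ⟨R.trans (σ.trans Cc⁻¹), Equiv.ext fun x => ?_⟩
    show Cc ((Cc⁻¹ : Equiv.Perm (Fin n)) (σ (R ((R⁻¹ : Equiv.Perm (Fin n)) x)))) = σ x
    rw [show Cc ((Cc⁻¹ : Equiv.Perm (Fin n)) (σ (R ((R⁻¹ : Equiv.Perm (Fin n)) x)))) = σ (R ((R⁻¹ : Equiv.Perm (Fin n)) x)) from Cc.apply_symm_apply _,
      show R ((R⁻¹ : Equiv.Perm (Fin n)) x) = x from R.apply_symm_apply x]
  have hper : tPer (fun i j => W (r i) (c j)) = tPer W := by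
    apply le_antisymm
    · refine Finset.sup_le fun π _ => ?_
      exact le_trans (le_of_eq (hΦw π)) (permWeight_le_tPer W (Φ π))
    · refine Finset.sup_le fun σ _ => ?_
      obtain ⟨π, rfl⟩ := hΦsurj σ
      exact le_trans (le_of_eq (hΦw π).symm) (permWeight_le_tPer _ π)
  obtain ⟨π₀, hmax, huni⟩ := hns
  refine ⟨Φ π₀, ?_, fun σ hσ => ?_⟩
  · show permWeight W (Φ π₀) = tPer W
    rw [← hΦw, hmax, hper]
  · obtain ⟨π, rfl⟩ := hΦsurj σ
    refine congrArg Φ (huni π ?_)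
    show permWeight (fun i j => W (r i) (c j)) π = tPer (fun i j => W (r i) (c j))
    rw [hΦw, hper]
    exact hσ

private lemma sum_map_tPer (A B : TMat n) (w : List Bool) :
    (((w.map (fun x => if x then A else B)).map tPer).sum : Trop)
      = (w.count true) • tPer A + (w.count false) • tPer B := by
  induction w with
  | nil => simp
  | cons x w ih =>
    cases x <;> simp [List.count_cons, succ_nsmul, ← List.map_map, ih] <;> abel

private lemma lower_bound (A B : TMat n) (w : List Bool) (i : Fin n) :
    (w.count true) • A i i + (w.count false) • B i i ≤ mEval A B w i i := by
  induction w with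
  | nil => simp [mEval, tId]
  | cons x w ih =>
    have hstep : (if x then A else B) i i + mEval A B w i i ≤ mEval A B (x :: w) i i :=
      Finset.le_sup (f := fun k => (if x then A else B) i k + mEval A B w k i)
        (Finset.mem_univ i)
    have hmid : (if x then A else B) i i
        + ((w.count true) • A i i + (w.count false) • B i i)
        ≤ mEval A B (x :: w) i i :=
      le_trans (add_le_add_right ih _) hstep
    refine le_trans (le_of_eq ?_) hmid
    cases x <;> simp [List.count_cons, succ_nsmul] <;> abel

end TraceEvalRest

set_option maxHeartbeats 1000000 in
/-- trace of the evaluation.  Under condition (PR),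
`tr(w(A,B)) = |w|_a · tr(A) + |w|_b · tr(B)`. -/
theorem trace_eval {n : ℕ} (A B : Matrix (Fin n) (Fin n) Trop)
    (w : List Bool) (hw : w ≠ [])
    (hA : tPer A = tTrace A) (hB : tPer B = tTrace B)
    (hrk : tropRank (mEval A B w) = n) :
    tTrace (mEval A B w) = w.count true • tTrace A + w.count false • tTrace B := by
  obtain ⟨x, w', rfl⟩ := List.exists_cons_of_ne_nil hw
  have hW : mEval A B (x :: w')
      = tmul (if x then A else B) (tProd (w'.map (fun y => if y then A else B))) := by
    rw [mEval_eq_tProd]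
    simp only [List.map_cons, tProd]
  have hNS : Nonsingular (tmul (if x then A else B)
      (tProd (w'.map (fun y => if y then A else B)))) := by
    rw [← hW]
    exact nonsingular_of_rank _ hrk
  obtain ⟨g, hg1, -⟩ := keyB (w'.map (fun y => if y then A else B)) (if x then A else B) hNS
  have hupper : tTrace (mEval A B (x :: w')) ≤
      (x :: w').count true • tTrace A + (x :: w').count false • tTrace B := by
    calc tTrace (mEval A B (x :: w')) ≤ tPer (mEval A B (x :: w')) := tTrace_le_tPer _
      _ = tPer (tmul (if x then A else B) (tProd (w'.map (fun y => if y then A else B)))) := by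
          rw [hW]
      _ ≤ permWeight (if x then A else B) g
            + ((w'.map (fun y => if y then A else B)).map tPer).sum := hg1
      _ ≤ tPer (if x then A else B)
            + ((w'.map (fun y => if y then A else B)).map tPer).sum :=
          add_le_add_left (permWeight_le_tPer _ g) _
      _ = tPer (if x then A else B)
            + ((w'.count true) • tPer A + (w'.count false) • tPer B) := by
          rw [sum_map_tPer]
      _ = (x :: w').count true • tPer A + (x :: w').count false • tPer B := by
          cases x <;> simp [List.count_cons, succ_nsmul] <;> abel
      _ = (x :: w').count true • tTrace A + (x :: w').count false • tTrace B := by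
          rw [hA, hB]
  have hlower : (x :: w').count true • tTrace A + (x :: w').count false • tTrace B
      ≤ tTrace (mEval A B (x :: w')) := by
    calc (x :: w').count true • tTrace A + (x :: w').count false • tTrace B
        = ∑ i, ((x :: w').count true • A i i + (x :: w').count false • B i i) := by
          rw [tTrace, tTrace, Finset.smul_sum, Finset.smul_sum, ← Finset.sum_add_distrib]
      _ ≤ ∑ i, mEval A B (x :: w') i i :=
          Finset.sum_le_sum fun i _ => lower_bound A B (x :: w') i
      _ = tTrace (mEval A B (x :: w')) := rfl
  exact le_antisymm hupper hlower
end

section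
/- Let u, v ∈ {a,b}⁺ be words such that (u,v) is a semigroup identity satisfied by the monoid U_n(𝕋) of upper triangular n × n tropical matrices. Let A, B ∈ Mat_n(𝕋) satisfy per(A) = tr(A), per(B) = tr(B), and rk_tr(u(A,B)) = rk_tr(v(A,B)) = n. Then u(A,B) = v(A,B). -/
attribute [local instance] Classical.propDecidable

section Chunk1
variable {n : ℕ}

namespace FRI

noncomputable def mat (A B : Matrix (Fin n) (Fin n) Trop) (x : Bool) :
    Matrix (Fin n) (Fin n) Trop := if x then A else B

def letterAt (w : List Bool) (t : ℕ) : Bool := w.getD t true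

noncomputable def arcW (A B : Matrix (Fin n) (Fin n) Trop) (w : List Bool) (q : ℕ → Fin n)
    (t : ℕ) : Trop := mat A B (letterAt w t) (q t) (q (t + 1))

noncomputable def wt (A B : Matrix (Fin n) (Fin n) Trop) (w : List Bool) (q : ℕ → Fin n) : Trop :=
  ∑ t ∈ Finset.range w.length, arcW A B w q t

lemma sum_ne_bot {ι : Type*} {s : Finset ι} {f : ι → Trop} (h : ∑ k ∈ s, f k ≠ ⊥) :
    ∀ k ∈ s, f k ≠ ⊥ := by
  intro k hk hbot
  apply h
  rw [← Finset.add_sum_erase s f hk, hbot, WithBot.bot_add]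

lemma sum_coe {ι : Type*} (s : Finset ι) (f : ι → Trop) (h : ∀ k ∈ s, f k ≠ ⊥) :
    ∑ k ∈ s, f k = ((∑ k ∈ s, WithBot.unbotD 0 (f k) : ℝ) : Trop) := by
  classical
  induction s using Finset.cons_induction with
  | empty => simp
  | cons a s ha ih =>
      have h1 : f a ≠ ⊥ := h a (Finset.mem_cons.mpr (Or.inl rfl))
      obtain ⟨r, hr⟩ := WithBot.ne_bot_iff_exists.mp h1
      rw [Finset.sum_cons, Finset.sum_cons, WithBot.coe_add,
        ih (fun k hk => h k (Finset.mem_cons.mpr (Or.inr hk))), ← hr, WithBot.unbotD_coe]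

lemma wt_cons (A B : Matrix (Fin n) (Fin n) Trop) (x : Bool) (w : List Bool) (q : ℕ → Fin n) :
    wt A B (x :: w) q = mat A B x (q 0) (q 1) + wt A B w (fun t => q (t + 1)) := by
  rw [wt, List.length_cons, Finset.sum_range_succ', add_comm]
  rfl

lemma wt_le_mEval (A B : Matrix (Fin n) (Fin n) Trop) :
    ∀ (w : List Bool) (i j : Fin n) (q : ℕ → Fin n),
      q 0 = i → q w.length = j → wt A B w q ≤ mEval A B w i j := by
  intro w
  induction w with
  | nil =>
      intro i j q h0 hl
      have : i = j := h0 ▸ hl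
      subst this
      simp [wt, mEval, tId]
  | cons x w ih =>
      intro i j q h0 hl
      rw [wt_cons]
      have h1 : wt A B w (fun t => q (t + 1)) ≤ mEval A B w (q 1) j :=
        ih (q 1) j _ rfl hl
      calc mat A B x (q 0) (q 1) + wt A B w (fun t => q (t + 1))
          ≤ mat A B x (q 0) (q 1) + mEval A B w (q 1) j := add_le_add le_rfl h1
        _ ≤ mEval A B (x :: w) i j := by
            subst h0
            exact Finset.le_sup (f := fun k => mat A B x (q 0) k + mEval A B w k j)
              (Finset.mem_univ (q 1))

lemma exists_wt (A B : Matrix (Fin n) (Fin n) Trop) :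
    ∀ (w : List Bool) (i j : Fin n), mEval A B w i j ≠ ⊥ →
      ∃ q : ℕ → Fin n, q 0 = i ∧ q w.length = j ∧ mEval A B w i j ≤ wt A B w q := by
  intro w
  induction w with
  | nil =>
      intro i j hne
      have hij : i = j := by
        by_contra hij
        exact hne (by simp [mEval, tId, hij])
      subst hij
      exact ⟨fun _ => i, rfl, rfl, by simp [wt, mEval, tId]⟩
  | cons x w ih =>
      intro i j hne
      obtain ⟨k, -, hk⟩ := Finset.exists_mem_eq_sup Finset.univ ⟨i, Finset.mem_univ i⟩
        (fun k => mat A B x i k + mEval A B w k j)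
      have hkne : mEval A B w k j ≠ ⊥ := by
        intro hbot
        exact hne (hk.trans (by rw [hbot, WithBot.add_bot]))
      obtain ⟨q, hq0, hql, hqw⟩ := ih k j hkne
      refine ⟨fun t => Nat.rec i (fun t' _ => q t') t, rfl, hql, ?_⟩
      rw [wt_cons]
      show mEval A B (x :: w) i j ≤ mat A B x i (q 0) + wt A B w q
      rw [hq0]
      calc mEval A B (x :: w) i j = mat A B x i k + mEval A B w k j := hk
        _ ≤ mat A B x i k + wt A B w q := add_le_add le_rfl hqw
end FRI
end Chunk1
section Chunk2
namespace FRI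
variable {n : ℕ}

lemma perm_eq_of_isEmpty (π σ : Equiv.Perm (Fin 0)) : π = σ :=
  Equiv.ext fun x => x.elim0

lemma nonsingular_of_rank (W : Matrix (Fin n) (Fin n) Trop) (h : tropRank W = n) :
    Nonsingular W := by
  classical
  set S : Set ℕ := {k : ℕ | ∃ (r : Fin k → Fin n) (c : Fin k → Fin n),
    Function.Injective r ∧ Function.Injective c ∧
    Nonsingular (fun i j => W (r i) (c j))} with hS
  have h0 : 0 ∈ S := by
    refine ⟨Fin.elim0, Fin.elim0, fun a => a.elim0, fun a => a.elim0, 1, ?_, ?_⟩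
    · rfl
    · intro π _; exact perm_eq_of_isEmpty π 1
  have hbdd : BddAbove S := by
    refine ⟨n, fun k hk => ?_⟩
    obtain ⟨r, c, hr, -, -⟩ := hk
    simpa using Fintype.card_le_of_injective r hr
  have hmem : n ∈ S := by
    have := Nat.sSup_mem ⟨0, h0⟩ hbdd
    rwa [show sSup S = n from h] at this
  obtain ⟨r, c, hr, hc, hNS⟩ := hmem
  have hrb : Function.Bijective r := Finite.injective_iff_bijective.mp hr
  have hcb : Function.Bijective c := Finite.injective_iff_bijective.mp hc
  set ρ : Equiv.Perm (Fin n) := Equiv.ofBijective r hrb with hρ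
  set γ : Equiv.Perm (Fin n) := Equiv.ofBijective c hcb with hγ
  set Φ : Equiv.Perm (Fin n) → Equiv.Perm (Fin n) := fun π => (ρ.symm.trans (π.trans γ)) with hΦ
  set Ψ : Equiv.Perm (Fin n) → Equiv.Perm (Fin n) := fun σ => (ρ.trans (σ.trans γ.symm)) with hΨ
  have hΦΨ : ∀ σ, Φ (Ψ σ) = σ := by
    intro σ
    apply Equiv.ext
    intro x
    simp [hΦ, hΨ]
  have key : ∀ π, permWeight (fun i j => W (r i) (c j)) π = permWeight W (Φ π) := by
    intro π
    show _ = ∑ k, W k (Φ π k)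
    rw [← Equiv.sum_comp ρ (fun k => W k (Φ π k))]
    apply Finset.sum_congr rfl
    intro i _
    show W (r i) (c (π i)) = W (ρ i) (γ (π (ρ.symm (ρ i))))
    rw [Equiv.symm_apply_apply]
    rfl
  have keyPer : tPer (fun i j => W (r i) (c j)) = tPer W := by
    apply le_antisymm
    · apply Finset.sup_le
      intro π _
      rw [key π]
      exact Finset.le_sup (Finset.mem_univ (Φ π))
    · apply Finset.sup_le
      intro σ _
      have : permWeight W σ = permWeight (fun i j => W (r i) (c j)) (Ψ σ) := by
        rw [key (Ψ σ), hΦΨ]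
      rw [this]
      exact Finset.le_sup (Finset.mem_univ (Ψ σ))
  obtain ⟨π₀, h1, h2⟩ := hNS
  refine ⟨Φ π₀, ?_, ?_⟩
  · show permWeight W (Φ π₀) = tPer W
    rw [← key π₀, h1, keyPer]
  · intro σ hσ
    replace hσ : permWeight W σ = tPer W := hσ
    have : permWeight (fun i j => W (r i) (c j)) (Ψ σ) = tPer (fun i j => W (r i) (c j)) := by
      rw [key (Ψ σ), hΦΨ, hσ, keyPer]
    have := h2 (Ψ σ) this
    rw [← hΦΨ σ, this]

end FRI
end Chunk2
section Chunk3
namespace FRI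
variable {n : ℕ}

lemma per_mat (A B : Matrix (Fin n) (Fin n) Trop) (hA : tPer A = tTrace A)
    (hB : tPer B = tTrace B) (x : Bool) : tPer (mat A B x) = tTrace (mat A B x) := by
  cases x <;> simpa [mat]

lemma wt_eq_split (A B : Matrix (Fin n) (Fin n) Trop) (w : List Bool) (q : ℕ → Fin n) (t : ℕ)
    (ht : t ≤ w.length) :
    wt A B w q = (∑ s ∈ Finset.Ico 0 t, arcW A B w q s) +
      ∑ s ∈ Finset.Ico t w.length, arcW A B w q s := by
  rw [wt, Finset.range_eq_Ico, ← Finset.sum_Ico_consecutive _ (Nat.zero_le t) ht]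

lemma arc_splice_lo (A B : Matrix (Fin n) (Fin n) Trop) (w : List Bool) (p p' : ℕ → Fin n)
    (t s : ℕ) (hs : s < t) :
    arcW A B w (fun a => if a ≤ t then p a else p' a) s = arcW A B w p s := by
  have h1 : s ≤ t := le_of_lt hs
  have h2 : s + 1 ≤ t := hs
  simp [arcW, h1, h2]

lemma arc_splice_hi (A B : Matrix (Fin n) (Fin n) Trop) (w : List Bool) (p p' : ℕ → Fin n)
    (t s : ℕ) (h : p t = p' t) (hs : t ≤ s) :
    arcW A B w (fun a => if a ≤ t then p a else p' a) s = arcW A B w p' s := by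
  by_cases heq : s = t
  · subst heq
    have h2 : ¬ (s + 1 ≤ s) := by omega
    simp [arcW, h2, h]
  · have h1 : ¬ (s ≤ t) := by omega
    have h2 : ¬ (s + 1 ≤ t) := by omega
    simp [arcW, h1, h2]

lemma wt_splice (A B : Matrix (Fin n) (Fin n) Trop) (w : List Bool) (p p' : ℕ → Fin n) (t : ℕ)
    (h : p t = p' t) (ht : t ≤ w.length) :
    wt A B w (fun a => if a ≤ t then p a else p' a) =
      (∑ s ∈ Finset.Ico 0 t, arcW A B w p s) +
        ∑ s ∈ Finset.Ico t w.length, arcW A B w p' s := by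
  rw [wt_eq_split A B w _ t ht]
  congr 1
  · exact Finset.sum_congr rfl fun s hs =>
      arc_splice_lo A B w p p' t s (Finset.mem_Ico.mp hs).2
  · exact Finset.sum_congr rfl fun s hs =>
      arc_splice_hi A B w p p' t s h (Finset.mem_Ico.mp hs).1

lemma sum_eq_of_le {ι : Type*} (s : Finset ι) (f g : ι → Trop) (hle : ∀ k ∈ s, f k ≤ g k)
    (heq : ∑ k ∈ s, f k = ∑ k ∈ s, g k) (hnb : ∑ k ∈ s, g k ≠ ⊥) :
    ∀ k ∈ s, f k = g k := by
  classical
  have hgk : ∀ k ∈ s, g k ≠ ⊥ := sum_ne_bot hnb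
  have hfk : ∀ k ∈ s, f k ≠ ⊥ := sum_ne_bot (heq ▸ hnb)
  have heqR : ∑ k ∈ s, WithBot.unbotD 0 (f k) = ∑ k ∈ s, WithBot.unbotD 0 (g k) := by
    have := heq
    rw [sum_coe s f hfk, sum_coe s g hgk] at this
    exact_mod_cast this
  intro k hk
  by_contra hne
  have hlt : f k < g k := lt_of_le_of_ne (hle k hk) hne
  have hltR : WithBot.unbotD 0 (f k) < WithBot.unbotD 0 (g k) := by
    obtain ⟨fr, hfr⟩ := WithBot.ne_bot_iff_exists.mp (hfk k hk)
    obtain ⟨gr, hgr⟩ := WithBot.ne_bot_iff_exists.mp (hgk k hk)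
    rw [← hfr, ← hgr] at hlt ⊢
    rw [WithBot.unbotD_coe, WithBot.unbotD_coe]
    exact_mod_cast hlt
  have hleR : ∀ j ∈ s, WithBot.unbotD 0 (f j) ≤ WithBot.unbotD 0 (g j) := by
    intro j hj
    obtain ⟨fr, hfr⟩ := WithBot.ne_bot_iff_exists.mp (hfk j hj)
    obtain ⟨gr, hgr⟩ := WithBot.ne_bot_iff_exists.mp (hgk j hj)
    have := hle j hj
    rw [← hfr, ← hgr] at this ⊢
    rw [WithBot.unbotD_coe, WithBot.unbotD_coe]
    exact_mod_cast this
  exact absurd heqR (ne_of_lt (Finset.sum_lt_sum hleR ⟨k, hk, hltR⟩))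



end FRI
end Chunk3
section Chunk4
namespace FRI
variable {n : ℕ}

lemma diag_of_nonsingular (A B : Matrix (Fin n) (Fin n) Trop)
    (hA : tPer A = tTrace A) (hB : tPer B = tTrace B) (hn : 2 ≤ n) (w : List Bool)
    (hNS : Nonsingular (mEval A B w)) :
    (∀ k, mEval A B w k k = wt A B w (fun _ => k)) ∧
      (∀ k, wt A B w (fun _ => k) ≠ ⊥) := by
  classical
  set W := mEval A B w with hW
  set ℓ := w.length with hℓ
  obtain ⟨π, hπ, huniq⟩ := hNS
  -- two distinct indices
  have hne01 : (⟨0, by omega⟩ : Fin n) ≠ ⟨1, by omega⟩ := Fin.ne_of_val_ne (by simp)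
  -- Step 1 : tPer W ≠ ⊥
  have hper : tPer W ≠ ⊥ := by
    intro hbot
    have hall : ∀ σ : Equiv.Perm (Fin n), permWeight W σ = tPer W := fun σ =>
      le_antisymm (Finset.le_sup (Finset.mem_univ σ)) (hbot ▸ bot_le)
    have e1 := huniq 1 (hall 1)
    have e2 := huniq (Equiv.swap ⟨0, by omega⟩ ⟨1, by omega⟩) (hall _)
    have : Equiv.swap (⟨0, by omega⟩ : Fin n) ⟨1, by omega⟩ = 1 := e2.trans e1.symm
    have h01 := Equiv.ext_iff.mp this (⟨0, by omega⟩ : Fin n)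
    rw [Equiv.swap_apply_left] at h01
    exact hne01 h01.symm
  -- Step 2 : entries on π are finite
  have hfinπ : ∀ i, W i (π i) ≠ ⊥ := by
    intro i
    have hsum : ∑ i, W i (π i) ≠ ⊥ := by
      show permWeight W π ≠ ⊥
      rw [hπ]; exact hper
    exact sum_ne_bot hsum i (Finset.mem_univ i)
  -- Step 3 : attaining paths
  have hex := fun i => exists_wt A B w i (π i) (hfinπ i)
  choose q hq0 hql hqw using hex
  have hqeq : ∀ i, wt A B w (q i) = W i (π i) := fun i =>
    le_antisymm (wt_le_mEval A B w i (π i) (q i) (hq0 i) (hql i)) (hqw i)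
  -- Step 4 : layers are injective
  have hinj : ∀ t, t ≤ ℓ → ∀ i i', q i t = q i' t → i = i' := by
    intro t ht i i' hcol
    by_contra hnei
    have htl : t ≠ ℓ := by
      intro hteq
      subst hteq
      exact hnei (π.injective ((hql i).symm.trans (hcol.trans (hql i'))))
    have htlt : t < ℓ := lt_of_le_of_ne ht htl
    set σ := Equiv.swap i i' with hσ
    set π' := π * σ with hπ'
    have hπ'app : ∀ j, π' j = π (σ j) := fun j => rfl
    have hπ'ne : π' ≠ π := by
      intro hh
      apply hnei
      have h1 : π (σ i) = π i := by rw [← hπ'app, hh]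
      have h2 : σ i = i := π.injective h1
      rw [hσ, Equiv.swap_apply_left] at h2
      exact h2.symm
    have hcolσ : ∀ j, q j t = q (σ j) t := by
      intro j
      by_cases hji : j = i
      · subst hji; rw [hσ, Equiv.swap_apply_left]; exact hcol
      · by_cases hji' : j = i'
        · subst hji'; rw [hσ, Equiv.swap_apply_right]; exact hcol.symm
        · rw [hσ, Equiv.swap_apply_of_ne_of_ne hji hji']
    set r : Fin n → ℕ → Fin n := fun j s => if s ≤ t then q j s else q (σ j) s with hr
    have hr0 : ∀ j, r j 0 = j := by
      intro j; simp only [hr, if_pos (Nat.zero_le t)]; exact hq0 j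
    have hrl : ∀ j, r j ℓ = π (σ j) := by
      intro j
      simp only [hr, if_neg (not_le.mpr htlt)]
      exact hql (σ j)
    have hwtr : ∀ j, wt A B w (r j) =
        (∑ s ∈ Finset.Ico 0 t, arcW A B w (q j) s) +
          ∑ s ∈ Finset.Ico t ℓ, arcW A B w (q (σ j)) s := fun j =>
      wt_splice A B w (q j) (q (σ j)) t (hcolσ j) (le_of_lt htlt)
    have hsum : ∑ j, wt A B w (r j) = ∑ j, wt A B w (q j) := by
      calc ∑ j, wt A B w (r j)
          = ∑ j, ((∑ s ∈ Finset.Ico 0 t, arcW A B w (q j) s) +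
              ∑ s ∈ Finset.Ico t ℓ, arcW A B w (q (σ j)) s) :=
            Finset.sum_congr rfl fun j _ => hwtr j
        _ = (∑ j, ∑ s ∈ Finset.Ico 0 t, arcW A B w (q j) s) +
              ∑ j, ∑ s ∈ Finset.Ico t ℓ, arcW A B w (q (σ j)) s := Finset.sum_add_distrib
        _ = (∑ j, ∑ s ∈ Finset.Ico 0 t, arcW A B w (q j) s) +
              ∑ j, ∑ s ∈ Finset.Ico t ℓ, arcW A B w (q j) s := by
            congr 1
            exact Equiv.sum_comp σ (fun j => ∑ s ∈ Finset.Ico t ℓ, arcW A B w (q j) s)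
        _ = ∑ j, ((∑ s ∈ Finset.Ico 0 t, arcW A B w (q j) s) +
              ∑ s ∈ Finset.Ico t ℓ, arcW A B w (q j) s) := Finset.sum_add_distrib.symm
        _ = ∑ j, wt A B w (q j) := Finset.sum_congr rfl fun j _ =>
              (wt_eq_split A B w (q j) t (le_of_lt htlt)).symm
    have hge : tPer W ≤ permWeight W π' := by
      calc tPer W = permWeight W π := hπ.symm
        _ = ∑ j, wt A B w (q j) := (Finset.sum_congr rfl fun j _ => (hqeq j).symm)
        _ = ∑ j, wt A B w (r j) := hsum.symm
        _ ≤ ∑ j, W j (π' j) := Finset.sum_le_sum fun j _ =>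
            (hπ'app j) ▸ wt_le_mEval A B w j (π (σ j)) (r j) (hr0 j) (hrl j)
        _ = permWeight W π' := rfl
    have hatt : permWeight W π' = tPer W :=
      le_antisymm (Finset.le_sup (Finset.mem_univ π')) hge
    exact hπ'ne (huniq π' hatt)
  -- Step 5 : layers are bijective
  have hbij : ∀ t, t ≤ ℓ → Function.Bijective (fun i => q i t) := fun t ht =>
    Finite.injective_iff_bijective.mp (fun i i' h => hinj t ht i i' h)
  -- Step 6 : tPer W ≤ sum of traces
  have hstep6 : tPer W ≤ ∑ t ∈ Finset.range ℓ, tTrace (mat A B (letterAt w t)) := by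
    calc tPer W = permWeight W π := hπ.symm
      _ = ∑ i, wt A B w (q i) := Finset.sum_congr rfl fun i _ => (hqeq i).symm
      _ = ∑ i, ∑ t ∈ Finset.range ℓ, arcW A B w (q i) t := rfl
      _ = ∑ t ∈ Finset.range ℓ, ∑ i, arcW A B w (q i) t := Finset.sum_comm
      _ ≤ ∑ t ∈ Finset.range ℓ, tTrace (mat A B (letterAt w t)) := by
        apply Finset.sum_le_sum
        intro t ht
        have htlt : t < ℓ := Finset.mem_range.mp ht
        set e1 := Equiv.ofBijective _ (hbij t (le_of_lt htlt)) with he1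
        set e2 := Equiv.ofBijective _ (hbij (t+1) htlt) with he2
        set τ := e1.symm.trans e2 with hτ
        have : ∑ i, arcW A B w (q i) t = permWeight (mat A B (letterAt w t)) τ := by
          show _ = ∑ k, mat A B (letterAt w t) k (τ k)
          rw [← Equiv.sum_comp e1 (fun k => mat A B (letterAt w t) k (τ k))]
          apply Finset.sum_congr rfl
          intro i _
          show mat A B (letterAt w t) (q i t) (q i (t+1)) = _
          have h2 : τ (q i t) = q i (t + 1) := by
            show e2 (e1.symm (e1 i)) = _
            rw [Equiv.symm_apply_apply]
            rfl
          show mat A B (letterAt w t) (q i t) (q i (t + 1)) =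
            mat A B (letterAt w t) (q i t) (τ (q i t))
          rw [h2]
        rw [this, ← per_mat A B hA hB (letterAt w t)]
        exact Finset.le_sup (Finset.mem_univ τ)
  -- Step 7 : sum of traces = sum of constant-path weights
  have hstep7 : ∑ t ∈ Finset.range ℓ, tTrace (mat A B (letterAt w t)) =
      ∑ k, wt A B w (fun _ => k) := by
    show ∑ t ∈ Finset.range ℓ, ∑ k, mat A B (letterAt w t) k k = _
    rw [Finset.sum_comm]
    rfl
  -- Step 8 : const-path weights ≤ diagonal
  have hconst_le : ∀ k : Fin n, wt A B w (fun _ => k) ≤ W k k := fun k =>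
    wt_le_mEval A B w k k (fun _ => k) rfl rfl
  have hstep8 : ∑ k, W k k ≤ tPer W := by
    show permWeight W 1 ≤ tPer W
    exact Finset.le_sup (Finset.mem_univ 1)
  have hchain1 : ∑ k, wt A B w (fun _ => k) ≤ ∑ k, W k k :=
    Finset.sum_le_sum fun k _ => hconst_le k
  -- all equal
  have hsums : ∑ k, wt A B w (fun _ => k) = ∑ k, W k k := by
    apply le_antisymm hchain1
    calc ∑ k, W k k ≤ tPer W := hstep8
      _ ≤ ∑ t ∈ Finset.range ℓ, tTrace (mat A B (letterAt w t)) := hstep6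
      _ = ∑ k, wt A B w (fun _ => k) := hstep7
  have hWnb : ∑ k, W k k ≠ ⊥ := by
    intro hbot
    apply hper
    apply le_antisymm _ bot_le
    calc tPer W ≤ ∑ t ∈ Finset.range ℓ, tTrace (mat A B (letterAt w t)) := hstep6
      _ = ∑ k, wt A B w (fun _ => k) := hstep7
      _ = ∑ k, W k k := hsums
      _ = ⊥ := hbot
  have hpt := sum_eq_of_le Finset.univ (fun k => wt A B w (fun _ => k)) (fun k => W k k)
    (fun k _ => hconst_le k) hsums hWnb
  constructor
  · intro k
    exact (hpt k (Finset.mem_univ k)).symm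
  · intro k
    have := sum_ne_bot (hsums ▸ hWnb) k (Finset.mem_univ k)
    exact this

end FRI
end Chunk4
section Chunk5
namespace FRI
variable {n : ℕ}

lemma sum_ne_bot_of_forall {ι : Type*} {s : Finset ι} {f : ι → Trop}
    (h : ∀ k ∈ s, f k ≠ ⊥) : ∑ k ∈ s, f k ≠ ⊥ := by
  rw [sum_coe s f h]
  exact WithBot.coe_ne_bot

lemma const_of_no_move (q : ℕ → Fin n) (s r : ℕ) (hsr : s ≤ r)
    (h : ∀ a ∈ Finset.Ico s r, q a = q (a + 1)) : q s = q r := by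
  induction r, hsr using Nat.le_induction with
  | base => rfl
  | succ r hr ih =>
      rw [ih (fun a ha => h a (Finset.mem_Ico.mpr
        ⟨(Finset.mem_Ico.mp ha).1, Nat.lt_succ_of_lt (Finset.mem_Ico.mp ha).2⟩))]
      exact h r (Finset.mem_Ico.mpr ⟨hr, Nat.lt_succ_self r⟩)

lemma exists_move (q : ℕ → Fin n) (s r : ℕ) (hsr : s ≤ r) (hne : q s ≠ q r) :
    ∃ a ∈ Finset.Ico s r, q a ≠ q (a + 1) := by
  by_contra hc
  push_neg at hc
  exact hne (const_of_no_move q s r hsr hc)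

lemma wt_eq_split3 (A B : Matrix (Fin n) (Fin n) Trop) (w : List Bool) (q : ℕ → Fin n)
    (s t : ℕ) (hst : s ≤ t) (ht : t ≤ w.length) :
    wt A B w q = (∑ a ∈ Finset.Ico 0 s, arcW A B w q a) +
      ((∑ a ∈ Finset.Ico s t, arcW A B w q a) +
        ∑ a ∈ Finset.Ico t w.length, arcW A B w q a) := by
  rw [wt, Finset.range_eq_Ico, ← Finset.sum_Ico_consecutive _ (Nat.zero_le s) (hst.trans ht),
    ← Finset.sum_Ico_consecutive _ hst ht]

lemma exists_noReturn (A B : Matrix (Fin n) (Fin n) Trop) (w : List Bool)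
    (hdiag : ∀ k, mEval A B w k k = wt A B w (fun _ => k))
    (hfin : ∀ k : Fin n, wt A B w (fun _ => k) ≠ ⊥) (i j : Fin n)
    (hne : mEval A B w i j ≠ ⊥) :
    ∃ q : ℕ → Fin n, q 0 = i ∧ q w.length = j ∧ mEval A B w i j ≤ wt A B w q ∧
      ∀ s r t, s ≤ r → r ≤ t → t ≤ w.length → q s = q t → q r = q s := by
  classical
  set ℓ := w.length with hℓ
  have hfin' : ∀ (x : Fin n), ∀ a ∈ Finset.range ℓ, arcW A B w (fun _ => x) a ≠ ⊥ :=
    fun x => sum_ne_bot (hfin x)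
  suffices H : ∀ (N : ℕ) (q : ℕ → Fin n), q 0 = i → q ℓ = j → mEval A B w i j ≤ wt A B w q →
      ((Finset.range ℓ).filter (fun a => q a ≠ q (a + 1))).card ≤ N →
      ∃ q' : ℕ → Fin n, q' 0 = i ∧ q' ℓ = j ∧ mEval A B w i j ≤ wt A B w q' ∧
        ∀ s r t, s ≤ r → r ≤ t → t ≤ ℓ → q' s = q' t → q' r = q' s by
    obtain ⟨q, hq0, hql, hqw⟩ := exists_wt A B w i j hne
    exact H _ q hq0 hql hqw le_rfl
  intro N
  induction N with
  | zero =>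
      intro q hq0 hql hqw hcard
      refine ⟨q, hq0, hql, hqw, ?_⟩
      intro s r t hsr hrt htl hst
      by_contra hqr
      obtain ⟨a, ha, hmv⟩ := exists_move q s r hsr (fun h => hqr (h ▸ rfl))
      have : a ∈ (Finset.range ℓ).filter (fun a => q a ≠ q (a + 1)) := by
        refine Finset.mem_filter.mpr ⟨Finset.mem_range.mpr ?_, hmv⟩
        have := (Finset.mem_Ico.mp ha).2
        omega
      have := Finset.card_pos.mpr ⟨a, this⟩
      omega
  | succ N ih =>
      intro q hq0 hql hqw hcard
      by_cases hgood : ∀ s r t, s ≤ r → r ≤ t → t ≤ ℓ → q s = q t → q r = q s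
      · exact ⟨q, hq0, hql, hqw, hgood⟩
      push_neg at hgood
      obtain ⟨s, r, t, hsr, hrt, htl, hqst, hqrs⟩ := hgood
      set x := q s with hx
      -- the flattened path
      set q' : ℕ → Fin n := fun a => if s ≤ a ∧ a ≤ t then x else q a with hq'
      have hq'bdry : ∀ a, a ≤ s ∨ t ≤ a → q' a = q a := by
        intro a ha
        show (if s ≤ a ∧ a ≤ t then x else q a) = q a
        by_cases hc : s ≤ a ∧ a ≤ t
        · rw [if_pos hc]
          rcases ha with ha | ha
          · have : a = s := le_antisymm ha hc.1
            rw [this, hx]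
          · have : a = t := le_antisymm hc.2 ha
            rw [this]
            exact hqst
        · rw [if_neg hc]
      have hq'mid : ∀ a, s ≤ a → a ≤ t → q' a = x := by
        intro a h1 h2
        show (if s ≤ a ∧ a ≤ t then x else q a) = x
        rw [if_pos ⟨h1, h2⟩]
      -- weight comparison
      have harc_lo : ∀ a ∈ Finset.Ico 0 s, arcW A B w q' a = arcW A B w q a := by
        intro a ha
        have h1 := (Finset.mem_Ico.mp ha).2
        rw [arcW, arcW, hq'bdry a (Or.inl (le_of_lt h1)), hq'bdry (a + 1) (Or.inl h1)]
      have harc_hi : ∀ a ∈ Finset.Ico t ℓ, arcW A B w q' a = arcW A B w q a := by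
        intro a ha
        have h1 := (Finset.mem_Ico.mp ha).1
        rw [arcW, arcW, hq'bdry a (Or.inr h1), hq'bdry (a + 1) (Or.inr (by omega))]
      have harc_mid : ∀ a ∈ Finset.Ico s t, arcW A B w q' a = arcW A B w (fun _ => x) a := by
        intro a ha
        obtain ⟨h1, h2⟩ := Finset.mem_Ico.mp ha
        rw [arcW, arcW, hq'mid a h1 (by omega), hq'mid (a + 1) (by omega) (by omega)]
      -- the middle inequality
      have hmid : (∑ a ∈ Finset.Ico s t, arcW A B w q a) ≤
          ∑ a ∈ Finset.Ico s t, arcW A B w (fun _ => x) a := by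
        by_contra hlt
        replace hlt := not_le.mp hlt
        -- the excursion path
        set q'' : ℕ → Fin n := fun a => if s ≤ a ∧ a ≤ t then q a else x with hq''
        have hq''bdry : ∀ a, a ≤ s ∨ t ≤ a → q'' a = x := by
          intro a ha
          show (if s ≤ a ∧ a ≤ t then q a else x) = x
          by_cases hc : s ≤ a ∧ a ≤ t
          · rw [if_pos hc]
            rcases ha with ha | ha
            · have : a = s := le_antisymm ha hc.1
              rw [this, hx]
            · have : a = t := le_antisymm hc.2 ha
              rw [this, ← hqst]
          · rw [if_neg hc]
        have hq''mid : ∀ a, s ≤ a → a ≤ t → q'' a = q a := by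
          intro a h1 h2
          show (if s ≤ a ∧ a ≤ t then q a else x) = q a
          rw [if_pos ⟨h1, h2⟩]
        have harc''_lo : ∀ a ∈ Finset.Ico 0 s,
            arcW A B w q'' a = arcW A B w (fun _ => x) a := by
          intro a ha
          have h1 := (Finset.mem_Ico.mp ha).2
          rw [arcW, arcW, hq''bdry a (Or.inl (le_of_lt h1)), hq''bdry (a + 1) (Or.inl h1)]
        have harc''_hi : ∀ a ∈ Finset.Ico t ℓ,
            arcW A B w q'' a = arcW A B w (fun _ => x) a := by
          intro a ha
          have h1 := (Finset.mem_Ico.mp ha).1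
          rw [arcW, arcW, hq''bdry a (Or.inr h1), hq''bdry (a + 1) (Or.inr (by omega))]
        have harc''_mid : ∀ a ∈ Finset.Ico s t, arcW A B w q'' a = arcW A B w q a := by
          intro a ha
          obtain ⟨h1, h2⟩ := Finset.mem_Ico.mp ha
          rw [arcW, arcW, hq''mid a h1 (by omega), hq''mid (a + 1) (by omega) (by omega)]
        have hq''0 : q'' 0 = x := hq''bdry 0 (Or.inl (Nat.zero_le s))
        have hq''l : q'' ℓ = x := hq''bdry ℓ (Or.inr htl)
        have hwt'' : wt A B w q'' ≤ wt A B w (fun _ => x) := by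
          rw [← hdiag x]
          exact wt_le_mEval A B w x x q'' hq''0 hq''l
        rw [wt_eq_split3 A B w q'' s t (hsr.trans hrt) htl,
          wt_eq_split3 A B w (fun _ => x) s t (hsr.trans hrt) htl,
          Finset.sum_congr rfl harc''_lo, Finset.sum_congr rfl harc''_mid,
          Finset.sum_congr rfl harc''_hi] at hwt''
        have hlo_ne : (∑ a ∈ Finset.Ico 0 s, arcW A B w (fun _ => x) a) ≠ ⊥ := by
          apply sum_ne_bot_of_forall
          intro a ha
          refine hfin' x a (Finset.mem_range.mpr ?_)
          have := (Finset.mem_Ico.mp ha).2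
          omega
        have hhi_ne : (∑ a ∈ Finset.Ico t ℓ, arcW A B w (fun _ => x) a) ≠ ⊥ := by
          apply sum_ne_bot_of_forall
          intro a ha
          refine hfin' x a (Finset.mem_range.mpr ?_)
          have := (Finset.mem_Ico.mp ha).2
          omega
        rw [WithBot.add_le_add_iff_left hlo_ne] at hwt''
        rw [WithBot.add_le_add_iff_right hhi_ne] at hwt''
        exact absurd hwt'' (not_le.mpr hlt)
      -- conclude weight of q' dominates that of q
      have hwt' : wt A B w q ≤ wt A B w q' := by
        rw [wt_eq_split3 A B w q s t (hsr.trans hrt) htl,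
          wt_eq_split3 A B w q' s t (hsr.trans hrt) htl,
          Finset.sum_congr rfl harc_lo, Finset.sum_congr rfl harc_mid,
          Finset.sum_congr rfl harc_hi]
        exact add_le_add le_rfl (add_le_add hmid le_rfl)
      -- endpoints
      have hq'0 : q' 0 = i := by rw [hq'bdry 0 (Or.inl (Nat.zero_le s))]; exact hq0
      have hq'l : q' ℓ = j := by rw [hq'bdry ℓ (Or.inr htl)]; exact hql
      -- moves strictly decrease
      have hsub : (Finset.range ℓ).filter (fun a => q' a ≠ q' (a + 1)) ⊂
          (Finset.range ℓ).filter (fun a => q a ≠ q (a + 1)) := by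
        constructor
        · intro a ha
          obtain ⟨har, hamv⟩ := Finset.mem_filter.mp ha
          refine Finset.mem_filter.mpr ⟨har, ?_⟩
          intro heq
          apply hamv
          by_cases hc : s ≤ a ∧ a + 1 ≤ t
          · rw [hq'mid a hc.1 (by omega), hq'mid (a + 1) (by omega) hc.2]
          · have hcc : a + 1 ≤ s ∨ t ≤ a := by omega
            rcases hcc with hcc | hcc
            · rw [hq'bdry a (Or.inl (by omega)), hq'bdry (a + 1) (Or.inl hcc), heq]
            · rw [hq'bdry a (Or.inr hcc), hq'bdry (a + 1) (Or.inr (by omega)), heq]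
        · intro hsub'
          obtain ⟨a, ha, hamv⟩ := exists_move q s r hsr (fun h => hqrs (by rw [← h]))
          obtain ⟨h1, h2⟩ := Finset.mem_Ico.mp ha
          have hmem : a ∈ (Finset.range ℓ).filter (fun a => q a ≠ q (a + 1)) :=
            Finset.mem_filter.mpr ⟨Finset.mem_range.mpr (by omega), hamv⟩
          have := hsub' hmem
          obtain ⟨-, hamv'⟩ := Finset.mem_filter.mp this
          apply hamv'
          rw [hq'mid a h1 (by omega), hq'mid (a + 1) (by omega) (by omega)]
      have hcard' : ((Finset.range ℓ).filter (fun a => q' a ≠ q' (a + 1))).card ≤ N := by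
        have := Finset.card_lt_card hsub
        omega
      exact ih q' hq'0 hq'l (hqw.trans hwt') hcard'

end FRI
end Chunk5
section Chunk6
namespace FRI
variable {n : ℕ}

lemma entry_le (A B : Matrix (Fin n) (Fin n) Trop) (u v : List Bool)
    (hid : ∀ X Y : Matrix (Fin n) (Fin n) Trop, UpperTri X → UpperTri Y →
      mEval X Y u = mEval X Y v)
    (hdiagU : ∀ k, mEval A B u k k = wt A B u (fun _ => k))
    (hfinU : ∀ k : Fin n, wt A B u (fun _ => k) ≠ ⊥)
    (i j : Fin n) : mEval A B u i j ≤ mEval A B v i j := by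
  classical
  by_cases hb : mEval A B u i j = ⊥
  · rw [hb]; exact bot_le
  obtain ⟨q, hq0, hql, hqw, hnr⟩ := exists_noReturn A B u hdiagU hfinU i j hb
  set ℓu := u.length with hℓu
  -- first-visit time function
  set f : Fin n → ℕ := fun y => if h : ∃ a, a ≤ ℓu ∧ q a = y then Nat.find h else ℓu + 1 + y.val
    with hf
  have hfvis : ∀ t, t ≤ ℓu → f (q t) ≤ t ∧ f (q t) ≤ ℓu ∧ q (f (q t)) = q t := by
    intro t ht
    have hex : ∃ a, a ≤ ℓu ∧ q a = q t := ⟨t, ht, rfl⟩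
    have h1 : f (q t) = Nat.find hex := by rw [hf]; exact dif_pos hex
    refine ⟨?_, ?_, ?_⟩
    · rw [h1]; exact Nat.find_min' hex ⟨ht, rfl⟩
    · rw [h1]; exact (Nat.find_spec hex).1
    · rw [h1]; exact (Nat.find_spec hex).2
  have hmono : ∀ s t, s ≤ t → t ≤ ℓu → f (q s) ≤ f (q t) := by
    intro s t hst htl
    by_contra hlt
    replace hlt := not_le.mp hlt
    obtain ⟨ha1, ha2, ha3⟩ := hfvis s (hst.trans htl)
    obtain ⟨hb1, hb2, hb3⟩ := hfvis t htl
    have hbs : f (q t) ≤ s := le_of_lt (lt_of_lt_of_le hlt ha1)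
    have : q s = q (f (q t)) := hnr (f (q t)) s t hbs hst htl hb3
    have heq : q s = q t := this.trans hb3
    rw [heq] at hlt
    omega
  have hfinj : Function.Injective f := by
    intro y z hyz
    replace hyz : (if h : ∃ a, a ≤ ℓu ∧ q a = y then Nat.find h else ℓu + 1 + y.val) =
        (if h : ∃ a, a ≤ ℓu ∧ q a = z then Nat.find h else ℓu + 1 + z.val) := hyz
    by_cases hy : ∃ a, a ≤ ℓu ∧ q a = y <;> by_cases hz : ∃ a, a ≤ ℓu ∧ q a = z
    · rw [dif_pos hy, dif_pos hz] at hyz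
      rw [← (Nat.find_spec hy).2, ← (Nat.find_spec hz).2, hyz]
    · rw [dif_pos hy, dif_neg hz] at hyz
      have := (Nat.find_spec hy).1
      omega
    · rw [dif_neg hy, dif_pos hz] at hyz
      have := (Nat.find_spec hz).1
      omega
    · rw [dif_neg hy, dif_neg hz] at hyz
      have : y.val = z.val := by omega
      exact Fin.ext this
  set ρ := Tuple.sort f with hρ
  have hstrict : StrictMono (f ∘ ρ) :=
    (Tuple.monotone_sort f).strictMono_of_injective (hfinj.comp ρ.injective)
  have horder : ∀ s t, s ≤ t → t ≤ ℓu → ρ.symm (q s) ≤ ρ.symm (q t) := by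
    intro s t hst htl
    have h1 : (f ∘ ρ) (ρ.symm (q s)) ≤ (f ∘ ρ) (ρ.symm (q t)) := by
      show f (ρ (ρ.symm (q s))) ≤ f (ρ (ρ.symm (q t)))
      rw [Equiv.apply_symm_apply, Equiv.apply_symm_apply]
      exact hmono s t hst htl
    exact hstrict.le_iff_le.mp h1
  -- triangular matrices
  set X : Matrix (Fin n) (Fin n) Trop := fun a b => if a ≤ b then A (ρ a) (ρ b) else ⊥ with hX
  set Y : Matrix (Fin n) (Fin n) Trop := fun a b => if a ≤ b then B (ρ a) (ρ b) else ⊥ with hY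
  have hXtri : UpperTri X := fun a b hab => if_neg (not_le.mpr hab)
  have hYtri : UpperTri Y := fun a b hab => if_neg (not_le.mpr hab)
  have hmatXY : ∀ (x : Bool) (a b : Fin n),
      mat X Y x a b = if a ≤ b then mat A B x (ρ a) (ρ b) else ⊥ := by
    intro x a b
    cases x <;> rfl
  -- transported path
  set qt : ℕ → Fin n := fun t => ρ.symm (q t) with hqt
  have harct : ∀ t ∈ Finset.range ℓu, arcW X Y u qt t = arcW A B u q t := by
    intro t ht
    have htlt : t < ℓu := Finset.mem_range.mp ht
    have hle : qt t ≤ qt (t + 1) := horder t (t + 1) (by omega) (by omega)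
    rw [arcW, arcW, hmatXY, if_pos hle]
    rw [hqt]
    rw [Equiv.apply_symm_apply, Equiv.apply_symm_apply]
  have hwtt : wt X Y u qt = wt A B u q := Finset.sum_congr rfl harct
  have h1 : mEval A B u i j ≤ mEval X Y u (qt 0) (qt ℓu) :=
    hqw.trans (hwtt ▸ wt_le_mEval X Y u (qt 0) (qt ℓu) qt rfl rfl)
  have h2 : mEval A B u i j ≤ mEval X Y v (qt 0) (qt ℓu) := by
    rw [← hid X Y hXtri hYtri]
    exact h1
  have h3 : mEval X Y v (qt 0) (qt ℓu) ≠ ⊥ := by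
    intro hc
    rw [hc] at h2
    exact hb (le_bot_iff.mp h2)
  obtain ⟨rt, hr0, hrl, hrw⟩ := exists_wt X Y v (qt 0) (qt ℓu) h3
  have harc_le : ∀ t ∈ Finset.range v.length,
      arcW X Y v rt t ≤ arcW A B v (fun a => ρ (rt a)) t := by
    intro t ht
    rw [arcW, arcW, hmatXY]
    by_cases hle : rt t ≤ rt (t + 1)
    · rw [if_pos hle]
    · rw [if_neg hle]; exact bot_le
  have hwtr : wt X Y v rt ≤ wt A B v (fun a => ρ (rt a)) := Finset.sum_le_sum harc_le
  have hend0 : ρ (rt 0) = i := by rw [hr0, hqt, Equiv.apply_symm_apply, hq0]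
  have hendl : ρ (rt v.length) = j := by rw [hrl, hqt, Equiv.apply_symm_apply, hql]
  calc mEval A B u i j ≤ mEval X Y v (qt 0) (qt ℓu) := h2
    _ ≤ wt X Y v rt := hrw
    _ ≤ wt A B v (fun a => ρ (rt a)) := hwtr
    _ ≤ mEval A B v i j := wt_le_mEval A B v i j _ hend0 hendl

end FRI
end Chunk6


/-- identities for matrices of full tropical rank.  If `(u,v)` is a
semigroup identity of the monoid `U_n(𝕋)` of upper triangular tropical matrices, and
`A, B` satisfy `per(A) = tr(A)`, `per(B) = tr(B)` and
`rk_tr(u(A,B)) = rk_tr(v(A,B)) = n`, then `u(A,B) = v(A,B)`. -/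
theorem full_rank_identity {n : ℕ} (u v : List Bool)
    (hu : u ≠ []) (hv : v ≠ []) (huv : u ≠ v)
    (hid : ∀ X Y : Matrix (Fin n) (Fin n) Trop, UpperTri X → UpperTri Y →
      mEval X Y u = mEval X Y v)
    (A B : Matrix (Fin n) (Fin n) Trop)
    (hA : tPer A = tTrace A) (hB : tPer B = tTrace B)
    (hru : tropRank (mEval A B u) = n) (hrv : tropRank (mEval A B v) = n) :
    mEval A B u = mEval A B v := by
  rcases n with _ | n'
  · funext i j
    exact i.elim0
  rcases n' with _ | m
  · -- n = 1 : every matrix is upper triangular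
    have htri : ∀ C : Matrix (Fin 1) (Fin 1) Trop, UpperTri C := by
      intro C i j hlt
      exfalso
      have h1 : j.val < i.val := hlt
      have := i.isLt
      have := j.isLt
      omega
    exact hid A B (htri A) (htri B)
  · have hn : 2 ≤ m + 2 := by omega
    have hNSu := FRI.nonsingular_of_rank _ hru
    have hNSv := FRI.nonsingular_of_rank _ hrv
    obtain ⟨hdU, hfU⟩ := FRI.diag_of_nonsingular A B hA hB hn u hNSu
    obtain ⟨hdV, hfV⟩ := FRI.diag_of_nonsingular A B hA hB hn v hNSv
    funext i j
    exact le_antisymm (FRI.entry_le A B u v hid hdU hfU i j)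
      (FRI.entry_le A B v u (fun X Y hX hY => (hid X Y hX hY).symm) hdV hfV i j)
end
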